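/- arXiv:1508.07337 — 4 statements merged into one kernel-verified Lean document; each statement's English description precedes it below -/
import Mathlib

section
/- For every directed graph G, the affine zero locus Z(G) of the incidence ideal is a union of finitely many ℂ-linear subspaces of ℂ^{E(G)}: there exist finitely many ℂ-submodules L_1, …, L_r of the space of functions E(G) → ℂ such that Z(G) = L_1 ∪ … ∪ L_r. -/
open MvPolynomial

/-- The `l`-th elementary symmetric polynomial in the finite set `s` of variables
(`1` for `l = 0`, `0` for `l > |s|`). -/
noncomputable def esymmOf (R : Type) [CommRing R] {E : Type} (s : Finset E) (l : ℕ) :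
    MvPolynomial E R :=
  ∑ t ∈ s.powersetCard l, ∏ x ∈ t, X x

/-- The incidence ideal of the directed graph with edge-endpoint maps `src`, `tgt`:
the ideal generated by the incidence relations
`δ_{v,l} = e_l(edges out of v) - e_l(edges into v)` for all vertices `v` and all `l ≥ 1`
(for `l > k_v` the relation `δ_{v,l}` is the zero polynomial, so this ideal is generated by
the `δ_{v,l}` with `1 ≤ l ≤ k_v`). -/
noncomputable def incidenceIdeal (R : Type) [CommRing R] {V E : Type}
    [Fintype E] [DecidableEq V] (src tgt : E → V) : Ideal (MvPolynomial E R) :=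
  Ideal.span {f | ∃ (v : V) (l : ℕ), 1 ≤ l ∧
    f = esymmOf R (Finset.univ.filter fun x => src x = v) l
      - esymmOf R (Finset.univ.filter fun x => tgt x = v) l}

/-- The affine zero locus in `ℂ^E` of an ideal of `ℤ[E]`. -/
def zeroLocus {E : Type} (I : Ideal (MvPolynomial E ℤ)) : Set (E → ℂ) :=
  {p | ∀ f ∈ I, MvPolynomial.aeval p f = 0}

/-! ### Auxiliary lemmas on elementary symmetric functions of multisets -/

lemma esymm_cons_zero (M : Multiset ℂ) {l : ℕ} (hl : 1 ≤ l) :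
    ((0 : ℂ) ::ₘ M).esymm l = M.esymm l := by
  obtain ⟨n, rfl⟩ : ∃ n, l = n + 1 := ⟨l - 1, (Nat.succ_pred_eq_of_pos hl).symm⟩
  unfold Multiset.esymm
  rw [Multiset.powersetCard_cons, Multiset.map_add, Multiset.sum_add, Multiset.map_map]
  simp [Function.comp, Multiset.prod_cons]

lemma esymm_add_zeros (M : Multiset ℂ) {N : Multiset ℂ} (hN : ∀ x ∈ N, x = 0) {l : ℕ}
    (hl : 1 ≤ l) : (M + N).esymm l = M.esymm l := by
  induction N using Multiset.induction with
  | empty => simp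
  | cons a N ih =>
      have ha : a = 0 := hN a (Multiset.mem_cons_self _ _)
      subst ha
      rw [Multiset.add_cons, esymm_cons_zero _ hl,
        ih fun x hx => hN x (Multiset.mem_cons_of_mem hx)]

lemma esymm_filter_ne_zero (M : Multiset ℂ) {l : ℕ} (hl : 1 ≤ l) :
    M.esymm l = (M.filter (· ≠ 0)).esymm l := by
  conv_lhs => rw [← Multiset.filter_add_not (· ≠ 0) M]
  exact esymm_add_zeros _ (fun x hx => by simpa using (Multiset.of_mem_filter hx)) hl

lemma powersetCard_card_self {α : Type*} (s : Multiset α) :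
    s.powersetCard (Multiset.card s) = {s} := by
  have hc : Multiset.card (s.powersetCard (Multiset.card s)) = 1 := by
    rw [Multiset.card_powersetCard, Nat.choose_self]
  obtain ⟨t, ht⟩ := Multiset.card_eq_one.mp hc
  have htm : t ∈ s.powersetCard (Multiset.card s) := by
    rw [ht]; exact Multiset.mem_singleton_self t
  obtain ⟨hle, hcd⟩ := Multiset.mem_powersetCard.mp htm
  rw [ht, Multiset.eq_of_le_of_card_le hle (le_of_eq hcd.symm)]

lemma esymm_card_prod (M : Multiset ℂ) : M.esymm (Multiset.card M) = M.prod := by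
  unfold Multiset.esymm
  rw [powersetCard_card_self]
  simp

/-- Two multisets of nonzero complex numbers with the same elementary symmetric functions
(in positive degrees) are equal. -/
lemma multiset_eq_of_esymm (M N : Multiset ℂ) (hM : ∀ x ∈ M, x ≠ 0) (hN : ∀ x ∈ N, x ≠ 0)
    (h : ∀ l, 1 ≤ l → M.esymm l = N.esymm l) : M = N := by
  have key : ∀ M N : Multiset ℂ, (∀ x ∈ M, x ≠ 0) → (∀ x ∈ N, x ≠ 0) →
      (∀ l, 1 ≤ l → M.esymm l = N.esymm l) → Multiset.card M ≤ Multiset.card N := by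
    intro M N hM hN h
    by_contra hlt
    push_neg at hlt
    have h1 : 1 ≤ Multiset.card M := lt_of_le_of_lt (Nat.zero_le _) hlt
    have hz : N.esymm (Multiset.card M) = 0 := by
      unfold Multiset.esymm
      rw [Multiset.powersetCard_eq_empty _ hlt]
      simp
    have hp : M.esymm (Multiset.card M) = M.prod := esymm_card_prod M
    have : M.prod ≠ 0 := Multiset.prod_ne_zero (fun h0 => hM 0 h0 rfl)
    rw [h _ h1, hz] at hp
    exact this hp.symm
  have hcard : Multiset.card M = Multiset.card N :=
    le_antisymm (key M N hM hN h) (key N M hN hM fun l hl => (h l hl).symm)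
  have hPQ : (M.map fun a => Polynomial.X - Polynomial.C a).prod
      = (N.map fun a => Polynomial.X - Polynomial.C a).prod := by
    ext k
    rcases le_or_gt k (Multiset.card M) with hk | hk
    · rw [Multiset.prod_X_sub_C_coeff M hk,
        Multiset.prod_X_sub_C_coeff N (show k ≤ Multiset.card N by omega), ← hcard]
      rcases eq_or_lt_of_le hk with he | hlt
      · rw [show Multiset.card M - k = 0 by omega]
        simp [Multiset.esymm]
      · congr 1
        exact h _ (by omega)
    · rw [Polynomial.coeff_eq_zero_of_natDegree_lt, Polynomial.coeff_eq_zero_of_natDegree_lt]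
      · rw [Polynomial.natDegree_multiset_prod_X_sub_C_eq_card, ← hcard]; exact hk
      · rw [Polynomial.natDegree_multiset_prod_X_sub_C_eq_card]; exact hk
  have := congrArg Polynomial.roots hPQ
  rwa [Polynomial.roots_multiset_prod_X_sub_C, Polynomial.roots_multiset_prod_X_sub_C] at this

/-- If `ρ` factors through `p` (as a function of the value), equal `p`-images imply equal
`ρ`-images. -/
lemma map_eq_map_of {α β : Type*} (p : α → ℂ) (ρ : α → β)
    (hρ : ∀ a b, p a = p b → ρ a = ρ b) :
    ∀ (M N : Multiset α), M.map p = N.map p → M.map ρ = N.map ρ := by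
  intro M
  induction M using Multiset.induction with
  | empty =>
      intro N h
      have : N.map p = 0 := h.symm ▸ rfl
      rw [Multiset.map_eq_zero] at this
      simp [this]
  | cons a M ih =>
      intro N h
      have hmem : p a ∈ N.map p := by
        rw [← h, Multiset.map_cons]; exact Multiset.mem_cons_self _ _
      obtain ⟨b, hbN, hpb⟩ := Multiset.mem_map.mp hmem
      obtain ⟨N', rfl⟩ := Multiset.exists_cons_of_mem hbN
      rw [Multiset.map_cons, Multiset.map_cons, hpb] at h
      have h' : M.map p = N'.map p := (Multiset.cons_inj_right _).mp h
      rw [Multiset.map_cons, Multiset.map_cons, ih N' h', hρ a b hpb.symm]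

lemma aeval_esymmOf {E : Type} (p : E → ℂ) (s : Finset E) (l : ℕ) :
    aeval p (esymmOf ℤ s l) = (s.val.map p).esymm l := by
  rw [esymmOf, map_sum, Finset.esymm_map_val]
  refine Finset.sum_congr rfl fun t _ => ?_
  rw [map_prod]
  simp

lemma mem_zL_iff {V E : Type} [Fintype E] [DecidableEq V] (src tgt : E → V)
    (p : E → ℂ) : p ∈ zeroLocus (incidenceIdeal ℤ src tgt) ↔
      ∀ (v : V) (l : ℕ), 1 ≤ l →
        ((Finset.univ.filter fun e => src e = v).val.map p).esymm l
          = ((Finset.univ.filter fun e => tgt e = v).val.map p).esymm l := by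
  constructor
  · intro hp v l hl
    have := hp _ (Ideal.subset_span ⟨v, l, hl, rfl⟩)
    rw [map_sub, sub_eq_zero, aeval_esymmOf, aeval_esymmOf] at this
    exact this
  · intro h f hf
    have hle : incidenceIdeal ℤ src tgt ≤ RingHom.ker (aeval p : MvPolynomial E ℤ →ₐ[ℤ] ℂ) := by
      rw [incidenceIdeal, Ideal.span_le]
      rintro f ⟨v, l, hl, rfl⟩
      simp only [SetLike.mem_coe, RingHom.mem_ker, map_sub, aeval_esymmOf, h v l hl, sub_self]
    exact hle hf

/-- The linear subspace of functions vanishing on `S` and constant along `ρ`. -/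
noncomputable def lsub {E : Type} (S : Finset E) (ρ : E → E) : Submodule ℂ (E → ℂ) where
  carrier := {p | (∀ e ∈ S, p e = 0) ∧ ∀ e, p e = p (ρ e)}
  add_mem' := by
    rintro a b ⟨ha1, ha2⟩ ⟨hb1, hb2⟩
    exact ⟨fun e he => by simp [ha1 e he, hb1 e he], fun e => by
      simp only [Pi.add_apply, ha2 e, hb2 e]⟩
  zero_mem' := ⟨fun _ _ => rfl, fun _ => rfl⟩
  smul_mem' := by
    rintro c q ⟨h1, h2⟩
    exact ⟨fun e he => by simp [h1 e he], fun e => by simp only [Pi.smul_apply, h2 e]⟩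

/-- The combinatorial validity condition for the pair `(S, ρ)`. -/
def Valid {V E : Type} [Fintype E] [DecidableEq V] [DecidableEq E] (src tgt : E → V)
    (S : Finset E) (ρ : E → E) : Prop :=
  ∀ v : V, ((Finset.univ.filter fun e => src e = v ∧ e ∉ S).val.map ρ)
    = ((Finset.univ.filter fun e => tgt e = v ∧ e ∉ S).val.map ρ)

theorem stmt0 {V E : Type} [Fintype V] [Fintype E] [DecidableEq V] [DecidableEq E]
    (src tgt : E → V) :
    ∃ (r : ℕ) (L : Fin r → Submodule ℂ (E → ℂ)),
      zeroLocus (incidenceIdeal ℤ src tgt) = ⋃ i, (L i : Set (E → ℂ)) := by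
  classical
  set L0 : Finset E × (E → E) → Submodule ℂ (E → ℂ) :=
    fun q => if Valid src tgt q.1 q.2 then lsub q.1 q.2 else ⊥ with hL0
  refine ⟨Fintype.card (Finset E × (E → E)),
    fun i => L0 ((Fintype.equivFin (Finset E × (E → E))).symm i), ?_⟩
  rw [(Fintype.equivFin (Finset E × (E → E))).symm.surjective.iUnion_comp
    (fun q => (L0 q : Set (E → ℂ)))]
  ext p
  simp only [Set.mem_iUnion, SetLike.mem_coe]
  constructor
  · -- zero locus ⊆ union
    intro hp
    have hmain := (mem_zL_iff src tgt p).mp hp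
    set F : {z : ℂ // ∃ e, p e = z} → E := fun q => q.2.choose with hF
    set ρ : E → E := fun e => F ⟨p e, ⟨e, rfl⟩⟩ with hρdef
    have hρp : ∀ e, p (ρ e) = p e := fun e => (⟨e, rfl⟩ : ∃ e', p e' = p e).choose_spec
    have hρ : ∀ a b, p a = p b → ρ a = ρ b := fun a b h => congrArg F (Subtype.ext h)
    set S : Finset E := Finset.univ.filter (fun e => p e = 0) with hSdef
    have hSiff : ∀ e, e ∉ S ↔ p e ≠ 0 := by intro e; simp [hSdef]
    have hfv : ∀ (f : E → V) (v : V),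
        (Finset.univ.filter fun e => f e = v ∧ e ∉ S).val
          = ((Finset.univ.filter fun e => f e = v).val).filter (fun e => p e ≠ 0) := by
      intro f v
      rw [← Finset.filter_val, Finset.filter_filter]
      congr 1
      apply Finset.filter_congr
      intro e _
      simp [hSiff e]
    have hvalid : Valid src tgt S ρ := by
      intro v
      apply map_eq_map_of p ρ hρ
      have key : (((Finset.univ.filter fun e => src e = v).val.map p).filter (· ≠ 0))
          = (((Finset.univ.filter fun e => tgt e = v).val.map p).filter (· ≠ 0)) := by
        apply multiset_eq_of_esymm
        · intro x hx; simpa using Multiset.of_mem_filter hx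
        · intro x hx; simpa using Multiset.of_mem_filter hx
        · intro l hl
          rw [← esymm_filter_ne_zero _ hl, ← esymm_filter_ne_zero _ hl]
          exact hmain v l hl
      rw [Multiset.filter_map, Multiset.filter_map] at key
      rw [hfv src v, hfv tgt v]
      exact key
    refine ⟨(S, ρ), ?_⟩
    rw [hL0]
    simp only
    rw [if_pos hvalid]
    exact ⟨fun e he => by simpa [hSdef] using he, fun e => (hρp e).symm⟩
  · -- union ⊆ zero locus
    rintro ⟨⟨S, ρ⟩, hq⟩
    rw [hL0] at hq
    simp only at hq
    by_cases hval : Valid src tgt S ρ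
    · rw [if_pos hval] at hq
      obtain ⟨hp1, hp2⟩ := hq
      rw [mem_zL_iff]
      intro v l hl
      have step : ∀ f : E → V,
          ((Finset.univ.filter fun e => f e = v).val.map p).esymm l
            = (((Finset.univ.filter fun e => f e = v ∧ e ∉ S).val.map ρ).map p).esymm l := by
        intro f
        have hff : ((Finset.univ.filter fun e => f e = v).val.filter (fun e => e ∉ S))
            = (Finset.univ.filter fun e => f e = v ∧ e ∉ S).val := by
          rw [← Finset.filter_val, Finset.filter_filter]
        have hsplit : (Finset.univ.filter fun e => f e = v).val.map p
            = ((Finset.univ.filter fun e => f e = v ∧ e ∉ S).val.map p)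
              + (((Finset.univ.filter fun e => f e = v).val.filter
                  (fun e => ¬ e ∉ S)).map p) := by
          conv_lhs => rw [← Multiset.filter_add_not (fun e => e ∉ S)
            ((Finset.univ.filter fun e => f e = v).val)]
          rw [Multiset.map_add, hff]
        rw [hsplit, esymm_add_zeros _ ?_ hl]
        · rw [Multiset.map_map]
          exact congrArg (Multiset.esymm · l) (Multiset.map_congr rfl fun e _ => hp2 e)
        · intro x hx
          obtain ⟨e, he, rfl⟩ := Multiset.mem_map.mp hx
          exact hp1 e (not_not.mp ((Multiset.mem_filter.mp he).2))
      rw [step src, step tgt, hval v]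
    · rw [if_neg hval] at hq
      rw [Submodule.mem_bot] at hq
      subst hq
      rw [mem_zL_iff]
      intro v l hl
      have hz : ∀ A : Multiset E, (A.map (fun _ => (0 : ℂ))).esymm l = 0 := by
        intro A
        have h0 : ((0 : Multiset ℂ) + A.map (fun _ => (0:ℂ))).esymm l
            = (0 : Multiset ℂ).esymm l :=
          esymm_add_zeros _ (fun x hx => by
            obtain ⟨e, _, rfl⟩ := Multiset.mem_map.mp hx; rfl) hl
        rw [zero_add] at h0
        rw [h0]
        unfold Multiset.esymm
        rw [Multiset.powersetCard_eq_empty _ (by simpa using (show 0 < l from hl))]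
        simp
      simpa using (hz _).trans (hz _).symm
end

section
/- Let G be a directed graph. For every maximal collection 𝒞 of pairwise edge-disjoint directed cycles in G, let L_𝒞 = {p : E(G) → ℂ | p(x) = 0 for every edge x not contained in any cycle of 𝒞, and p(x) = p(y) whenever the edges x and y belong to the same cycle of 𝒞}, a ℂ-linear subspace of ℂ^{E(G)}. Then Z(G) equals the union of the subspaces L_𝒞 over all maximal collections 𝒞 of pairwise edge-disjoint directed cycles in G. -/
open MvPolynomial

/-- A directed cycle in the directed graph with edge-endpoint maps `src`, `tgt`:
pairwise distinct vertices `v_0, …, v_n` and edges `x_0, …, x_n` with `x_i` going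
from `v_i` to `v_{i+1}` (indices mod `n+1`). -/
structure DirCycle {V E : Type} (src tgt : E → V) where
  n : ℕ
  vtx : ZMod (n + 1) → V
  edge : ZMod (n + 1) → E
  vtx_inj : Function.Injective vtx
  edge_src : ∀ i, src (edge i) = vtx i
  edge_tgt : ∀ i, tgt (edge i) = vtx (i + 1)

/-- `C` is the set of edges of a directed cycle.  (A directed cycle, considered up to
cyclic permutation, is uniquely determined by its set of edges.) -/
def IsCycle {V E : Type} (src tgt : E → V) (C : Set E) : Prop :=
  ∃ c : DirCycle src tgt, C = Set.range c.edge

/-- A collection of pairwise edge-disjoint directed cycles (given by their edge sets). -/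
def IsDisjointCollection {V E : Type} (src tgt : E → V) (𝒞 : Set (Set E)) : Prop :=
  (∀ C ∈ 𝒞, IsCycle src tgt C) ∧ 𝒞.Pairwise Disjoint

/-- A maximal collection of pairwise edge-disjoint directed cycles. -/
def IsMaximalCollection {V E : Type} (src tgt : E → V) (𝒞 : Set (Set E)) : Prop :=
  IsDisjointCollection src tgt 𝒞 ∧
    ∀ 𝒟, IsDisjointCollection src tgt 𝒟 → 𝒞 ⊆ 𝒟 → 𝒟 = 𝒞

/-- The linear subspace `L_𝒞` of `ℂ^E` attached to a collection `𝒞` of edge-disjoint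
directed cycles: `p x = 0` for edges `x` on no cycle of `𝒞`, and `p x = p y` for edges
`x`, `y` on the same cycle of `𝒞`. -/
def cycleSubspace {E : Type} (𝒞 : Set (Set E)) : Set (E → ℂ) :=
  {p | (∀ x : E, (∀ C ∈ 𝒞, x ∉ C) → p x = 0) ∧
    ∀ C ∈ 𝒞, ∀ x ∈ C, ∀ y ∈ C, p x = p y}

/-! ### Auxiliary lemmas: elementary symmetric functions of multisets of complex numbers -/

section EsymmLemmas

open Polynomial

lemma aux_esymm_cons_zero (u : Multiset ℂ) (l : ℕ) (hl : 1 ≤ l) :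
    ((0 : ℂ) ::ₘ u).esymm l = u.esymm l := by
  obtain ⟨m, rfl⟩ : ∃ m, l = m + 1 := ⟨l - 1, (Nat.succ_pred_eq_of_pos hl).symm⟩
  simp only [Multiset.esymm, Multiset.powersetCard_cons, Multiset.map_add, Multiset.sum_add,
    Multiset.map_map]
  have h2 : (Multiset.map (Multiset.prod ∘ (Multiset.cons 0)) (Multiset.powersetCard m u)).sum
      = 0 := by
    rw [Multiset.map_congr rfl (fun t _ => by simp : ∀ t ∈ Multiset.powersetCard m u,
      (Multiset.prod ∘ (Multiset.cons (0:ℂ))) t = 0)]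
    simp
  rw [h2, add_zero]

lemma aux_esymm_replicate_add (k : ℕ) (u : Multiset ℂ) (l : ℕ) (hl : 1 ≤ l) :
    (Multiset.replicate k (0:ℂ) + u).esymm l = u.esymm l := by
  induction k with
  | zero => simp
  | succ k ih =>
    rw [Multiset.replicate_succ, Multiset.cons_add, aux_esymm_cons_zero _ _ hl, ih]

lemma aux_esymm_filter_ne (s : Multiset ℂ) (l : ℕ) (hl : 1 ≤ l) :
    s.esymm l = (s.filter (fun a => a ≠ 0)).esymm l := by
  classical
  conv_lhs => rw [← Multiset.filter_add_not (fun a => a = 0) s, Multiset.filter_eq',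
    aux_esymm_replicate_add _ _ _ hl]

lemma aux_powersetCard_self (u : Multiset ℂ) :
    u.powersetCard (Multiset.card u) = Multiset.replicate 1 u := by
  apply Multiset.eq_replicate.mpr
  constructor
  · rw [Multiset.card_powersetCard, Nat.choose_self]
  · intro t ht
    rw [Multiset.mem_powersetCard] at ht
    exact Multiset.eq_of_le_of_card_le ht.1 (le_of_eq ht.2.symm)

lemma aux_esymm_card_ne_zero (u : Multiset ℂ) (hu : ∀ a ∈ u, a ≠ 0) :
    u.esymm (Multiset.card u) ≠ 0 := by
  rw [Multiset.esymm, aux_powersetCard_self]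
  simpa using Multiset.prod_ne_zero (fun h0 => hu 0 h0 rfl)

lemma aux_esymm_of_card_lt (u : Multiset ℂ) {l : ℕ} (hl : Multiset.card u < l) :
    u.esymm l = 0 := by
  obtain ⟨i, hi, rfl⟩ : ∃ i, 0 < i ∧ l = Multiset.card u + i :=
    ⟨l - Multiset.card u, by omega, by omega⟩
  rw [Multiset.esymm, Multiset.powersetCard_card_add u hi]
  simp

lemma aux_eq_of_esymm_eq (s₁ t₁ : Multiset ℂ)
    (hs0 : ∀ a ∈ s₁, a ≠ 0) (ht0 : ∀ a ∈ t₁, a ≠ 0)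
    (h₁ : ∀ l, 1 ≤ l → s₁.esymm l = t₁.esymm l) : s₁ = t₁ := by
  classical
  have hcard : Multiset.card s₁ = Multiset.card t₁ := by
    by_contra hne
    rcases Nat.lt_or_ge (Multiset.card s₁) (Multiset.card t₁) with hlt | hge
    · have h1 : 1 ≤ Multiset.card t₁ := by omega
      exact aux_esymm_card_ne_zero t₁ ht0 ((h₁ _ h1).symm.trans (aux_esymm_of_card_lt s₁ hlt))
    · have hlt : Multiset.card t₁ < Multiset.card s₁ := by omega
      have h1 : 1 ≤ Multiset.card s₁ := by omega
      exact aux_esymm_card_ne_zero s₁ hs0 ((h₁ _ h1).trans (aux_esymm_of_card_lt t₁ hlt))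
  set n := Multiset.card s₁ with hn
  have hpoly : (s₁.map fun a => Polynomial.X - Polynomial.C a).prod = (t₁.map fun a => Polynomial.X - Polynomial.C a).prod := by
    ext k
    rcases le_or_gt k n with hk | hk
    · rw [Multiset.prod_X_sub_C_coeff s₁ hk, Multiset.prod_X_sub_C_coeff t₁ (hcard ▸ hk),
        ← hcard]
      rcases Nat.eq_or_lt_of_le hk with heq | hlt
      · rw [heq]; simp [Multiset.esymm, ← hn]
      · rw [h₁ (n - k) (by omega)]
    · rw [coeff_eq_zero_of_natDegree_lt, coeff_eq_zero_of_natDegree_lt]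
      · rw [natDegree_multiset_prod_X_sub_C_eq_card]; exact hcard ▸ hk
      · rw [natDegree_multiset_prod_X_sub_C_eq_card]; exact hk
  have hroots : ∀ u : Multiset ℂ, (u.map fun a => Polynomial.X - Polynomial.C a).prod.roots = u := by
    intro u
    rw [roots_multiset_prod _ (by
      intro h0
      obtain ⟨a, _, ha⟩ := Multiset.mem_map.mp h0
      exact X_sub_C_ne_zero a ha)]
    rw [Multiset.bind_map]
    simp only [roots_X_sub_C]
    simpa using Multiset.bind_singleton u id
  have := congrArg Polynomial.roots hpoly
  rwa [hroots, hroots] at this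

end EsymmLemmas

/-! ### Auxiliary lemmas: directed cycles -/

section CycleLemmas

variable {V E : Type} [Fintype V] [Fintype E] [DecidableEq V] [DecidableEq E]
  (src tgt : E → V)

lemma DirCycle.edge_inj (c : DirCycle src tgt) : Function.Injective c.edge := by
  intro i j h
  apply c.vtx_inj
  rw [← c.edge_src, ← c.edge_src, h]

lemma aux_zmod_val_add_one {n : ℕ} (i : ZMod (n + 1)) (h : i.val < n) :
    (i + 1).val = i.val + 1 := by
  have hn : 0 < n := Nat.pos_of_ne_zero (by rintro rfl; omega)
  have h1 : 1 % (n + 1) = 1 := Nat.mod_eq_of_lt (by omega)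
  rw [ZMod.val_add, ZMod.val_one_eq_one_mod, h1, Nat.mod_eq_of_lt (by omega)]

lemma aux_cycle_count (c : DirCycle src tgt) (v : V) :
    ((Finset.univ.image c.edge).filter fun x => src x = v).card =
    ((Finset.univ.image c.edge).filter fun x => tgt x = v).card := by
  rw [Finset.filter_image, Finset.filter_image,
    Finset.card_image_of_injective _ (c.edge_inj src tgt),
    Finset.card_image_of_injective _ (c.edge_inj src tgt)]
  simp only [c.edge_src, c.edge_tgt]
  exact (Finset.card_bij' (fun i _ => i + 1) (fun j _ => j - 1)
    (by intro a ha; simp only [Finset.mem_filter, Finset.mem_univ, true_and] at ha ⊢; exact ha)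
    (by intro a ha; simp only [Finset.mem_filter, Finset.mem_univ, true_and] at ha ⊢;
        rw [sub_add_cancel]; exact ha)
    (by intro a _; ring) (by intro a _; ring)).symm

lemma aux_exists_cycle_of_balanced (S : Finset E) (hne : S.Nonempty)
    (hbal : ∀ v, (S.filter fun x => src x = v).card = (S.filter fun x => tgt x = v).card) :
    ∃ c : DirCycle src tgt, ∀ i, c.edge i ∈ S := by
  classical
  have step : ∀ e : {e // e ∈ S}, ∃ e' : {e // e ∈ S}, src e'.1 = tgt e.1 := by
    rintro ⟨e, he⟩
    have h1 : 0 < (S.filter fun x => tgt x = tgt e).card :=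
      Finset.card_pos.mpr ⟨e, Finset.mem_filter.mpr ⟨he, rfl⟩⟩
    rw [← hbal (tgt e)] at h1
    obtain ⟨e', he'⟩ := Finset.card_pos.mp h1
    rw [Finset.mem_filter] at he'
    exact ⟨⟨e', he'.1⟩, he'.2⟩
  let nxt : {e // e ∈ S} → {e // e ∈ S} := fun e => (step e).choose
  have hnxt : ∀ e, src (nxt e).1 = tgt e.1 := fun e => (step e).choose_spec
  let f : ℕ → {e // e ∈ S} := fun n => nxt^[n] ⟨hne.choose, hne.choose_spec⟩
  have hstep : ∀ m, src (f (m + 1)).1 = tgt (f m).1 := by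
    intro m
    have : f (m + 1) = nxt (f m) := Function.iterate_succ_apply' nxt m _
    rw [this]; exact hnxt (f m)
  set σ : ℕ → V := fun m => src (f m).1 with hσ
  have hpig : ∃ a b : ℕ, a < b ∧ σ a = σ b := by
    have := Fintype.exists_ne_map_eq_of_card_lt
      (fun i : Fin (Fintype.card V + 1) => σ i.1) (by simp)
    obtain ⟨i, j, hij, hval⟩ := this
    rcases lt_or_gt_of_ne (fun h : (i:ℕ) = (j:ℕ) => hij (Fin.ext h)) with h | h
    · exact ⟨i, j, h, hval⟩
    · exact ⟨j, i, h, hval.symm⟩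
  have hP : ∃ d, ∃ a, σ a = σ (a + d + 1) := by
    obtain ⟨a, b, hab, hval⟩ := hpig
    exact ⟨b - a - 1, a, by rw [show a + (b - a - 1) + 1 = b by omega]; exact hval⟩
  let n := Nat.find hP
  obtain ⟨a, ha⟩ : ∃ a, σ a = σ (a + n + 1) := Nat.find_spec hP
  have hdist : ∀ i j, i < j → j ≤ n → σ (a + i) ≠ σ (a + j) := by
    intro i j hij hj h
    have : ∃ e, σ e = σ (e + (j - i - 1) + 1) :=
      ⟨a + i, by rw [show a + i + (j - i - 1) + 1 = a + j by omega]; exact h⟩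
    exact absurd this (Nat.find_min hP (by omega))
  refine ⟨⟨n, fun k => σ (a + k.val), fun k => (f (a + k.val)).1, ?_, fun i => rfl, ?_⟩,
    fun i => (f (a + i.val)).2⟩
  · intro k₁ k₂ hk
    by_contra hne'
    have hv : k₁.val ≠ k₂.val := fun h => hne' (ZMod.val_injective _ h)
    have h₁ : k₁.val ≤ n := Nat.lt_succ_iff.mp (ZMod.val_lt k₁)
    have h₂ : k₂.val ≤ n := Nat.lt_succ_iff.mp (ZMod.val_lt k₂)
    rcases Nat.lt_or_ge k₁.val k₂.val with h | h
    · exact hdist _ _ h h₂ hk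
    · exact hdist _ _ (by omega) h₁ hk.symm
  · intro i
    show tgt (f (a + i.val)).1 = σ (a + (i + 1).val)
    rw [← hstep (a + i.val)]
    have hle : i.val ≤ n := Nat.lt_succ_iff.mp (ZMod.val_lt i)
    rcases Nat.lt_or_ge i.val n with h | h
    · rw [aux_zmod_val_add_one i h]
      show σ (a + i.val + 1) = σ (a + (i.val + 1))
      rw [← Nat.add_assoc]
    · have hn : i.val = n := by omega
      have h0 : (i + 1).val = 0 := by
        have : i + 1 = 0 := by
          have hi : i = (n : ZMod (n + 1)) := by
            apply ZMod.val_injective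
            rw [hn, ZMod.val_natCast_of_lt (by omega)]
          rw [hi]
          have h2 := ZMod.natCast_self (n + 1)
          push_cast at h2
          exact h2
        rw [this, ZMod.val_zero]
      rw [h0]
      show σ (a + i.val + 1) = σ (a + 0)
      rw [hn, Nat.add_zero]
      exact ha.symm

lemma aux_decomp : ∀ (N : ℕ) (S : Finset E), S.card ≤ N →
    (∀ v, (S.filter fun x => src x = v).card = (S.filter fun x => tgt x = v).card) →
    ∃ 𝒞 : Set (Set E), (∀ C ∈ 𝒞, IsCycle src tgt C ∧ C ⊆ (S : Set E)) ∧
      𝒞.Pairwise Disjoint ∧ ∀ x ∈ S, ∃ C ∈ 𝒞, x ∈ C := by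
  intro N
  induction N with
  | zero =>
    intro S hS _
    have : S = ∅ := Finset.card_eq_zero.mp (Nat.le_zero.mp hS)
    subst this
    exact ⟨∅, by simp, Set.pairwise_empty _, by simp⟩
  | succ N ih =>
    intro S hS hbal
    rcases S.eq_empty_or_nonempty with rfl | hne
    · exact ⟨∅, by simp, Set.pairwise_empty _, by simp⟩
    obtain ⟨c, hc⟩ := aux_exists_cycle_of_balanced src tgt S hne hbal
    set R : Finset E := Finset.univ.image c.edge with hR
    have hRS : R ⊆ S := by
      intro x hx
      obtain ⟨i, _, rfl⟩ := Finset.mem_image.mp hx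
      exact hc i
    have hCR : Set.range c.edge = (R : Set E) := by
      ext x; simp [hR]
    set S' := S \ R with hS'
    have hfilter : ∀ (P : E → Prop) [DecidablePred P],
        (S'.filter P) = S.filter P \ R.filter P := by
      intro P _
      ext x
      simp only [hS', Finset.mem_filter, Finset.mem_sdiff]
      tauto
    have hbal' : ∀ v, (S'.filter fun x => src x = v).card =
        (S'.filter fun x => tgt x = v).card := by
      intro v
      rw [hfilter, hfilter, Finset.card_sdiff_of_subset (Finset.filter_subset_filter _ hRS),
        Finset.card_sdiff_of_subset (Finset.filter_subset_filter _ hRS), hbal v,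
        aux_cycle_count src tgt c v]
    have hcard : S'.card ≤ N := by
      have hlt : S'.card < S.card := Finset.card_lt_card
        ⟨Finset.sdiff_subset, fun hsub => by
          have h0 : c.edge 0 ∈ S' := hsub (hc 0)
          rw [hS', Finset.mem_sdiff] at h0
          exact h0.2 (Finset.mem_image_of_mem _ (Finset.mem_univ 0))⟩
      omega
    obtain ⟨𝒞', h𝒞'⟩ := ih S' hcard hbal'
    refine ⟨insert (Set.range c.edge) 𝒞', ?_, ?_, ?_⟩
    · rintro C (rfl | hC)
      · exact ⟨⟨c, rfl⟩, by rw [hCR]; exact_mod_cast hRS⟩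
      · exact ⟨(h𝒞'.1 C hC).1, ((h𝒞'.1 C hC).2).trans (by
          intro x hx
          exact (Finset.mem_sdiff.mp hx).1)⟩
    · apply Set.Pairwise.insert h𝒞'.2.1
      intro D hD _
      have hdisj : Disjoint (Set.range c.edge) D := by
        rw [Set.disjoint_left]
        intro x hx hxD
        have := (h𝒞'.1 D hD).2 hxD
        rw [Finset.coe_sdiff] at this
        exact this.2 (hCR ▸ hx)
      exact ⟨hdisj, hdisj.symm⟩
    · intro x hx
      by_cases hxR : x ∈ R
      · exact ⟨Set.range c.edge, Set.mem_insert _ _, by rw [hCR]; exact_mod_cast hxR⟩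
      · obtain ⟨C, hC, hxC⟩ := h𝒞'.2.2 x (Finset.mem_sdiff.mpr ⟨hx, hxR⟩)
        exact ⟨C, Set.mem_insert_of_mem _ hC, hxC⟩

lemma IsCycle.nonempty {C : Set E} (h : IsCycle src tgt C) : C.Nonempty := by
  obtain ⟨c, rfl⟩ := h
  exact ⟨c.edge 0, Set.mem_range_self 0⟩

lemma aux_extend : ∀ (N : ℕ) (U : Finset E) (𝒞 : Set (Set E)), U.card ≤ N →
    IsDisjointCollection src tgt 𝒞 → (∀ x : E, (∀ C ∈ 𝒞, x ∉ C) → x ∈ U) →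
    ∃ 𝒟, IsMaximalCollection src tgt 𝒟 ∧ 𝒞 ⊆ 𝒟 ∧
      ∀ D ∈ 𝒟, D ∉ 𝒞 → ∀ C ∈ 𝒞, Disjoint D C := by
  intro N
  induction N with
  | zero =>
    intro U 𝒞 hU h𝒞 hcov
    by_cases hex : ∃ C, IsCycle src tgt C ∧ ∀ C' ∈ 𝒞, Disjoint C C'
    · exfalso
      obtain ⟨C, hCcyc, hCdisj⟩ := hex
      obtain ⟨x0, hx0⟩ := hCcyc.nonempty src tgt
      have : x0 ∈ U := hcov x0 (fun C' hC' hx =>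
        (Set.disjoint_right.mp (hCdisj C' hC')) hx hx0)
      have : U.Nonempty := ⟨x0, this⟩
      rw [← Finset.card_pos] at this
      omega
    · refine ⟨𝒞, ⟨h𝒞, ?_⟩, subset_refl _, fun D hD hD' _ _ => absurd hD hD'⟩
      intro 𝒟 h𝒟 hsub
      apply Set.Subset.antisymm _ hsub
      intro D hD
      by_contra hD𝒞
      exact hex ⟨D, h𝒟.1 D hD, fun C' hC' =>
        h𝒟.2 hD (hsub hC') (fun h => hD𝒞 (h ▸ hC'))⟩
  | succ N ih =>
    intro U 𝒞 hU h𝒞 hcov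
    classical
    by_cases hex : ∃ C, IsCycle src tgt C ∧ ∀ C' ∈ 𝒞, Disjoint C C'
    · obtain ⟨C, hCcyc, hCdisj⟩ := hex
      obtain ⟨x0, hx0⟩ := hCcyc.nonempty src tgt
      have hCnot : C ∉ 𝒞 := fun h =>
        (Set.disjoint_right.mp (hCdisj C h)) hx0 hx0
      have hx0U : x0 ∈ U := hcov x0 (fun C' hC' hx =>
        (Set.disjoint_right.mp (hCdisj C' hC')) hx hx0)
      set U' := U.filter (fun x => x ∉ C) with hU'
      have hU'card : U'.card ≤ N := by
        have hss : U' ⊂ U := ⟨Finset.filter_subset _ _, fun hsub => by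
          have := Finset.mem_filter.mp (hsub hx0U)
          exact this.2 hx0⟩
        have := Finset.card_lt_card hss
        omega
      have h𝒞' : IsDisjointCollection src tgt (insert C 𝒞) := by
        constructor
        · rintro D (rfl | hD)
          · exact hCcyc
          · exact h𝒞.1 D hD
        · apply Set.Pairwise.insert h𝒞.2
          intro D hD _
          exact ⟨hCdisj D hD, (hCdisj D hD).symm⟩
      have hcov' : ∀ x : E, (∀ C' ∈ insert C 𝒞, x ∉ C') → x ∈ U' := by
        intro x hx
        rw [hU', Finset.mem_filter]
        exact ⟨hcov x (fun C' hC' => hx C' (Set.mem_insert_of_mem _ hC')),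
          hx C (Set.mem_insert _ _)⟩
      obtain ⟨𝒟, h𝒟max, h𝒟sub, h𝒟disj⟩ := ih U' (insert C 𝒞) hU'card h𝒞' hcov'
      refine ⟨𝒟, h𝒟max, (Set.subset_insert _ _).trans h𝒟sub, ?_⟩
      intro D hD hD𝒞 C'' hC''
      by_cases hDC' : D ∈ insert C 𝒞
      · rcases hDC' with rfl | hD2
        · exact hCdisj C'' hC''
        · exact absurd hD2 hD𝒞
      · exact h𝒟disj D hD hDC' C'' (Set.mem_insert_of_mem _ hC'')
    · refine ⟨𝒞, ⟨h𝒞, ?_⟩, subset_refl _, fun D hD hD' _ _ => absurd hD hD'⟩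
      intro 𝒟 h𝒟 hsub
      apply Set.Subset.antisymm _ hsub
      intro D hD
      by_contra hD𝒞
      exact hex ⟨D, h𝒟.1 D hD, fun C' hC' =>
        h𝒟.2 hD (hsub hC') (fun h => hD𝒞 (h ▸ hC'))⟩

end CycleLemmas

/-! ### Auxiliary lemmas: the algebra-graph bridge -/

section Bridge

variable {V E : Type} [Fintype V] [Fintype E] [DecidableEq V] [DecidableEq E]
  (src tgt : E → V)

lemma aux_aeval_esymmOf (p : E → ℂ) (s : Finset E) (l : ℕ) :
    MvPolynomial.aeval p (esymmOf ℤ s l) = (s.val.map p).esymm l := by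
  rw [esymmOf, Finset.esymm_map_val, map_sum]
  apply Finset.sum_congr rfl
  intro t _
  rw [map_prod]
  simp [aeval_X]

lemma aux_mem_zeroLocus_iff (p : E → ℂ) :
    p ∈ zeroLocus (incidenceIdeal ℤ src tgt) ↔
    ∀ (v : V) (l : ℕ), 1 ≤ l →
      ((Finset.univ.filter fun x => src x = v).val.map p).esymm l =
      ((Finset.univ.filter fun x => tgt x = v).val.map p).esymm l := by
  constructor
  · intro hp v l hl
    have hmem : (esymmOf ℤ (Finset.univ.filter fun x => src x = v) l
        - esymmOf ℤ (Finset.univ.filter fun x => tgt x = v) l) ∈ incidenceIdeal ℤ src tgt :=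
      Ideal.subset_span ⟨v, l, hl, rfl⟩
    have := hp _ hmem
    rw [map_sub, aux_aeval_esymmOf, aux_aeval_esymmOf, sub_eq_zero] at this
    exact this
  · intro h p' hp'
    refine Submodule.span_induction ?_ ?_ ?_ ?_ hp'
    · rintro f ⟨v, l, hl, rfl⟩
      rw [map_sub, aux_aeval_esymmOf, aux_aeval_esymmOf, sub_eq_zero]
      exact h v l hl
    · simp
    · intro x y _ _ hx hy; rw [map_add, hx, hy, add_zero]
    · intro a x _ hx; rw [smul_eq_mul, map_mul, hx, mul_zero]

lemma aux_count_map (p : E → ℂ) (P : E → Prop) [DecidablePred P] (b : ℂ) :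
    Multiset.count b ((Finset.univ.filter P).val.map p) =
    (Finset.univ.filter fun x => P x ∧ b = p x).card := by
  rw [Multiset.count_map]
  have : Multiset.filter (fun a => b = p a) (Finset.filter P Finset.univ).val =
      (Finset.filter (fun x => P x ∧ b = p x) Finset.univ).val := by
    rw [Finset.filter_val, Finset.filter_val, Multiset.filter_filter]
    exact Multiset.filter_congr (fun x _ => by tauto)
  rw [this]
  rfl

lemma aux_count_eq (𝒞 : Set (Set E)) (h𝒞 : IsDisjointCollection src tgt 𝒞) (p : E → ℂ)
    (hp : p ∈ cycleSubspace 𝒞) (v : V) (c : ℂ) (hc : c ≠ 0) :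
    (Finset.univ.filter fun x => src x = v ∧ c = p x).card =
    (Finset.univ.filter fun x => tgt x = v ∧ c = p x).card := by
  classical
  set T := {C ∈ 𝒞 | ∃ x ∈ C, p x = c} with hT
  have hTfin : T.Finite := Set.toFinite T
  have key : ∀ (q : E → V),
      (Finset.univ.filter fun x => q x = v ∧ c = p x) =
      hTfin.toFinset.biUnion (fun C => Finset.univ.filter fun x => x ∈ C ∧ q x = v) := by
    intro q
    ext x
    simp only [Finset.mem_filter, Finset.mem_univ, true_and, Finset.mem_biUnion,
      Set.Finite.mem_toFinset]
    constructor
    · rintro ⟨hP, hcx⟩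
      have hx0 : p x ≠ 0 := fun h => hc (hcx.trans h)
      have hEx : ∃ C ∈ 𝒞, x ∈ C := by
        by_contra hno
        push_neg at hno
        exact hx0 (hp.1 x hno)
      obtain ⟨C, hC𝒞, hxC⟩ := hEx
      exact ⟨C, ⟨hC𝒞, x, hxC, hcx.symm⟩, hxC, hP⟩
    · rintro ⟨C, ⟨hC𝒞, x0, hx0C, hpx0⟩, hxC, hP⟩
      exact ⟨hP, by rw [← hpx0]; exact hp.2 C hC𝒞 x0 hx0C x hxC⟩
  have hdisj : ∀ (q : E → V), (hTfin.toFinset : Set (Set E)).Pairwise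
      fun C D => Disjoint (Finset.univ.filter fun x => x ∈ C ∧ q x = v)
        (Finset.univ.filter fun x => x ∈ D ∧ q x = v) := by
    intro q C hC D hD hCD
    have : Disjoint C D := h𝒞.2 (hTfin.mem_toFinset.mp hC).1 (hTfin.mem_toFinset.mp hD).1 hCD
    rw [Finset.disjoint_left]
    intro x hx hx'
    rw [Finset.mem_filter] at hx hx'
    exact (Set.disjoint_left.mp this) hx.2.1 hx'.2.1
  rw [key src, key tgt,
    Finset.card_biUnion (fun C hC D hD hCD => hdisj src hC hD hCD),
    Finset.card_biUnion (fun C hC D hD hCD => hdisj tgt hC hD hCD)]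
  apply Finset.sum_congr rfl
  intro C hC
  obtain ⟨cyc, rfl⟩ := h𝒞.1 C (hTfin.mem_toFinset.mp hC).1
  convert aux_cycle_count src tgt cyc v using 2 <;>
    · ext x
      simp only [Finset.mem_filter, Finset.mem_image, Finset.mem_univ, true_and,
        Set.mem_range]
      try tauto

lemma aux_multiset_filter_eq (𝒞 : Set (Set E)) (h𝒞 : IsDisjointCollection src tgt 𝒞)
    (p : E → ℂ) (hp : p ∈ cycleSubspace 𝒞) (v : V) :
    ((Finset.univ.filter fun x => src x = v).val.map p).filter (fun a => a ≠ 0) =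
    ((Finset.univ.filter fun x => tgt x = v).val.map p).filter (fun a => a ≠ 0) := by
  classical
  ext b
  rcases eq_or_ne b 0 with rfl | hb
  · rw [Multiset.count_filter_of_neg (by simp), Multiset.count_filter_of_neg (by simp)]
  · rw [Multiset.count_filter_of_pos (p := fun a => a ≠ 0) hb,
      Multiset.count_filter_of_pos (p := fun a => a ≠ 0) hb, aux_count_map, aux_count_map]
    exact aux_count_eq src tgt 𝒞 h𝒞 p hp v b hb

end Bridge

theorem stmt2 {V E : Type} [Fintype V] [Fintype E] [DecidableEq V] [DecidableEq E]
    (src tgt : E → V) :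
    zeroLocus (incidenceIdeal ℤ src tgt) =
      ⋃ 𝒞 ∈ {𝒞 | IsMaximalCollection src tgt 𝒞}, cycleSubspace 𝒞 := by
  classical
  ext p
  simp only [Set.mem_iUnion, Set.mem_setOf_eq, exists_prop]
  constructor
  · -- zero locus ⊆ union
    intro hp
    have hZ := (aux_mem_zeroLocus_iff src tgt p).mp hp
    have hfe : ∀ v : V,
        ((Finset.univ.filter fun x => src x = v).val.map p).filter (fun a => a ≠ 0) =
        ((Finset.univ.filter fun x => tgt x = v).val.map p).filter (fun a => a ≠ 0) := by
      intro v
      apply aux_eq_of_esymm_eq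
      · exact fun a ha => (Multiset.mem_filter.mp ha).2
      · exact fun a ha => (Multiset.mem_filter.mp ha).2
      · intro l hl
        rw [← aux_esymm_filter_ne _ _ hl, ← aux_esymm_filter_ne _ _ hl]
        exact hZ v l hl
    -- for each nonzero value c, the fiber is balanced and decomposes into cycles
    have key : ∀ c : ℂ, c ≠ 0 → ∃ 𝒞c : Set (Set E),
        (∀ C ∈ 𝒞c, IsCycle src tgt C ∧ ∀ x ∈ C, c = p x) ∧ 𝒞c.Pairwise Disjoint ∧
        ∀ x : E, c = p x → ∃ C ∈ 𝒞c, x ∈ C := by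
      intro c hc
      set S : Finset E := Finset.univ.filter (fun x => c = p x) with hS
      have hbal : ∀ v, (S.filter fun x => src x = v).card =
          (S.filter fun x => tgt x = v).card := by
        intro v
        have h1 : ∀ (q : E → V), (S.filter fun x => q x = v) =
            Finset.univ.filter fun x => q x = v ∧ c = p x := by
          intro q; ext x
          simp only [hS, Finset.mem_filter, Finset.mem_univ, true_and]
          tauto
        rw [h1 src, h1 tgt]
        have h2 := congrArg (Multiset.count c) (hfe v)
        rwa [Multiset.count_filter_of_pos (p := fun a => a ≠ 0) hc,
          Multiset.count_filter_of_pos (p := fun a => a ≠ 0) hc,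
          aux_count_map, aux_count_map] at h2
      obtain ⟨𝒞c, h1, h2, h3⟩ := aux_decomp src tgt S.card S (le_refl _) hbal
      refine ⟨𝒞c, ?_, h2, ?_⟩
      · intro C hC
        refine ⟨(h1 C hC).1, fun x hx => ?_⟩
        have := (h1 C hC).2 hx
        rw [Finset.mem_coe, hS, Finset.mem_filter] at this
        exact this.2
      · intro x hx
        exact h3 x (by rw [hS, Finset.mem_filter]; exact ⟨Finset.mem_univ x, hx⟩)
    choose! F hF1 hF2 hF3 using key
    set 𝒞₀ : Set (Set E) := ⋃ c ∈ {c : ℂ | c ≠ 0}, F c with h𝒞₀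
    have hmem𝒞₀ : ∀ C, C ∈ 𝒞₀ ↔ ∃ c : ℂ, c ≠ 0 ∧ C ∈ F c := by
      intro C
      simp [h𝒞₀, Set.mem_iUnion]
    have h𝒞₀disj : IsDisjointCollection src tgt 𝒞₀ := by
      constructor
      · intro C hC
        obtain ⟨c, hc, hCF⟩ := (hmem𝒞₀ C).mp hC
        exact (hF1 c hc C hCF).1
      · intro C hC D hD hCD
        obtain ⟨c, hc, hCF⟩ := (hmem𝒞₀ C).mp hC
        obtain ⟨d, hd, hDF⟩ := (hmem𝒞₀ D).mp hD
        rcases eq_or_ne c d with rfl | hcd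
        · exact hF2 c hc hCF hDF hCD
        · rw [Set.disjoint_left]
          intro x hxC hxD
          exact hcd (((hF1 c hc C hCF).2 x hxC).trans ((hF1 d hd D hDF).2 x hxD).symm)
    have hcov𝒞₀ : ∀ x : E, p x ≠ 0 → ∃ C ∈ 𝒞₀, x ∈ C := by
      intro x hx
      obtain ⟨C, hCF, hxC⟩ := hF3 (p x) hx x rfl
      exact ⟨C, (hmem𝒞₀ C).mpr ⟨p x, hx, hCF⟩, hxC⟩
    obtain ⟨𝒟, h𝒟max, h𝒟sub, h𝒟disj⟩ := aux_extend src tgt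
      (Finset.univ : Finset E).card Finset.univ 𝒞₀ (le_refl _) h𝒞₀disj
      (fun x _ => Finset.mem_univ x)
    refine ⟨𝒟, h𝒟max, ?_, ?_⟩
    · intro x hx
      by_contra hx0
      obtain ⟨C, hC, hxC⟩ := hcov𝒞₀ x hx0
      exact hx C (h𝒟sub hC) hxC
    · intro D hD x hx y hy
      by_cases hD𝒞₀ : D ∈ 𝒞₀
      · obtain ⟨c, hc, hDF⟩ := (hmem𝒞₀ D).mp hD𝒞₀
        rw [← (hF1 c hc D hDF).2 x hx, ← (hF1 c hc D hDF).2 y hy]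
      · have hdisj := h𝒟disj D hD hD𝒞₀
        have hzero : ∀ z ∈ D, p z = 0 := by
          intro z hz
          by_contra hz0
          obtain ⟨C, hC, hzC⟩ := hcov𝒞₀ z hz0
          exact (Set.disjoint_left.mp (hdisj C hC)) hz hzC
        rw [hzero x hx, hzero y hy]
  · -- union ⊆ zero locus
    rintro ⟨𝒞, h𝒞max, hp⟩
    rw [aux_mem_zeroLocus_iff]
    intro v l hl
    rw [aux_esymm_filter_ne _ _ hl, aux_multiset_filter_eq src tgt 𝒞 h𝒞max.1 p hp v,
      ← aux_esymm_filter_ne _ _ hl]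
end

section
/- Let G be a directed graph. Then G contains no undirected cycle (equivalently, the underlying undirected graph of G is a disjoint union of trees) if and only if the incidence ideal I(G) equals the ideal of ℤ[E(G)] generated by all the edge variables, that is, if and only if ℤ[E(G)]/I(G) ≅ ℤ as graded rings. -/
open MvPolynomial

/-- An undirected cycle in the directed graph with edge-endpoint maps `src`, `tgt`:
pairwise distinct vertices `v_0, …, v_n` and pairwise distinct edges `x_0, …, x_n`
such that `x_i` joins `v_i` and `v_{i+1}` with either orientation (indices mod `n+1`). -/
structure UndirCycle {V E : Type} (src tgt : E → V) where
  n : ℕ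
  vtx : ZMod (n + 1) → V
  edge : ZMod (n + 1) → E
  vtx_inj : Function.Injective vtx
  edge_inj : Function.Injective edge
  edge_ends : ∀ i, (src (edge i) = vtx i ∧ tgt (edge i) = vtx (i + 1)) ∨
    (src (edge i) = vtx (i + 1) ∧ tgt (edge i) = vtx i)

lemma esymmOf_one {E : Type} (s : Finset E) :
    esymmOf ℤ s 1 = ∑ x ∈ s, X x := by
  simp [esymmOf, Finset.powersetCard_one, Finset.sum_map]

lemma esymmOf_mem_span {E : Type} (s : Finset E) {l : ℕ} (hl : 1 ≤ l) :
    esymmOf ℤ s l ∈ Ideal.span (Set.range (X : E → MvPolynomial E ℤ)) := by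
  classical
  refine Ideal.sum_mem _ (fun t ht => ?_)
  rw [Finset.mem_powersetCard] at ht
  obtain ⟨x, hx⟩ : t.Nonempty := Finset.card_pos.mp (by omega)
  rw [← Finset.mul_prod_erase t _ hx]
  exact Ideal.mul_mem_right _ _ (Ideal.subset_span ⟨x, rfl⟩)

lemma loopCycle {V E : Type} (src tgt : E → V) (e : E) (h : src e = tgt e) :
    Nonempty (UndirCycle src tgt) := by
  haveI : Subsingleton (ZMod (0 + 1)) := inferInstanceAs (Subsingleton (Fin 1))
  refine ⟨⟨0, fun _ => src e, fun _ => e, fun a b _ => Subsingleton.elim a b,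
    fun a b _ => Subsingleton.elim a b, fun i => Or.inl ⟨rfl, h.symm⟩⟩⟩

lemma buildCycle {V E : Type} (src tgt : E → V) (e : E) (n : ℕ) (hn : 1 ≤ n)
    (f : Fin (n + 1) → V) (hf : Function.Injective f)
    (hadj : ∀ i : Fin n, ∃ x, x ≠ e ∧
      ((src x = f i.castSucc ∧ tgt x = f i.succ) ∨ (src x = f i.succ ∧ tgt x = f i.castSucc)))
    (h0 : f 0 = src e) (hl : f (Fin.last n) = tgt e) :
    Nonempty (UndirCycle src tgt) := by
  classical
  choose x hxe hx using hadj
  haveI : Fact (1 < n + 1) := ⟨by omega⟩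
  set vtx : ZMod (n + 1) → V := fun j => f ⟨j.val, j.val_lt⟩ with hvtx
  set edge : ZMod (n + 1) → E := fun j => if h : j.val < n then x ⟨j.val, h⟩ else e with hedge
  have hval1 : ∀ j : ZMod (n + 1), j.val < n → (j + 1).val = j.val + 1 := by
    intro j hj
    rw [ZMod.val_add, ZMod.val_one]
    exact Nat.mod_eq_of_lt (by omega)
  have hvaln : ∀ j : ZMod (n + 1), j.val = n → (j + 1).val = 0 := by
    intro j hj
    rw [ZMod.val_add, ZMod.val_one, hj]
    simp
  -- endpoints determine index
  have hxinj : ∀ i i' : Fin n, x i = x i' → i = i' := by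
    intro i i' hii
    have h1 := hx i
    have h2 := hx i'
    rw [hii] at h1
    rcases h1 with ⟨ha, hb⟩ | ⟨ha, hb⟩ <;> rcases h2 with ⟨hc, hd⟩ | ⟨hc, hd⟩
    · have := hf (ha.symm.trans hc)
      exact Fin.castSucc_injective n this
    · have e1 := hf (ha.symm.trans hc)
      have e2 := hf (hb.symm.trans hd)
      have v1 : (i.castSucc : Fin (n+1)).val = i'.succ.val := congrArg Fin.val e1
      have v2 : (i.succ : Fin (n+1)).val = i'.castSucc.val := congrArg Fin.val e2
      simp [Fin.val_succ] at v1 v2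
      omega
    · have e1 := hf (ha.symm.trans hc)
      have e2 := hf (hb.symm.trans hd)
      have v1 : (i.succ : Fin (n+1)).val = i'.castSucc.val := congrArg Fin.val e1
      have v2 : (i.castSucc : Fin (n+1)).val = i'.succ.val := congrArg Fin.val e2
      simp [Fin.val_succ] at v1 v2
      omega
    · have := hf (ha.symm.trans hc)
      exact Fin.succ_injective n this
  refine ⟨⟨n, vtx, edge, ?_, ?_, ?_⟩⟩
  · intro a b hab
    apply ZMod.val_injective
    have := hf hab
    rw [Fin.mk.injEq] at this
    exact this
  · intro a b hab
    simp only [hedge] at hab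
    by_cases ha : a.val < n <;> by_cases hb : b.val < n
    · rw [dif_pos ha, dif_pos hb] at hab
      have := hxinj _ _ hab
      apply ZMod.val_injective
      rw [Fin.mk.injEq] at this
      exact this
    · rw [dif_pos ha, dif_neg hb] at hab
      exact absurd hab (hxe _)
    · rw [dif_neg ha, dif_pos hb] at hab
      exact absurd hab.symm (hxe _)
    · apply ZMod.val_injective
      have h1 : a.val = n := by have := a.val_lt; omega
      have h2 : b.val = n := by have := b.val_lt; omega
      omega
  · intro j
    by_cases hj : j.val < n
    · have hv1 : vtx (j + 1) = f ⟨j.val + 1, by omega⟩ := by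
        simp only [hvtx]
        congr 1
        exact Fin.ext (hval1 j hj)
      have hv0 : vtx j = f ((⟨j.val, hj⟩ : Fin n).castSucc) := by
        simp only [hvtx]; congr 1
      have hedgej : edge j = x ⟨j.val, hj⟩ := by simp only [hedge]; rw [dif_pos hj]
      have hsu : f ((⟨j.val, hj⟩ : Fin n).succ) = f ⟨j.val + 1, by omega⟩ := by congr 1
      rw [hedgej, hv0, hv1, ← hsu]
      exact hx _
    · have hjn : j.val = n := by have := j.val_lt; omega
      have hedgej : edge j = e := by simp only [hedge]; rw [dif_neg hj]
      have hv0 : vtx j = tgt e := by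
        simp only [hvtx]
        rw [← hl]; congr 1
        exact Fin.ext hjn
      have hv1 : vtx (j + 1) = src e := by
        simp only [hvtx]
        rw [← h0]; congr 1
        exact Fin.ext (hvaln j hjn)
      rw [hedgej, hv0, hv1]
      exact Or.inr ⟨rfl, rfl⟩

lemma X_mem_incidence {V E : Type} [Fintype V] [Fintype E] [DecidableEq V] [DecidableEq E]
    (src tgt : E → V) (hnc : IsEmpty (UndirCycle src tgt)) (e : E) :
    (X e : MvPolynomial E ℤ) ∈ incidenceIdeal ℤ src tgt := by
  classical
  set H : SimpleGraph V :=
    { Adj := fun a b => a ≠ b ∧ ∃ x, x ≠ e ∧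
        ((src x = a ∧ tgt x = b) ∨ (src x = b ∧ tgt x = a))
      symm := by
        constructor
        rintro a b ⟨hab, x, hx, h | h⟩
        · exact ⟨hab.symm, x, hx, Or.inr h⟩
        · exact ⟨hab.symm, x, hx, Or.inl h⟩
      loopless := by constructor; rintro a ⟨h, -⟩; exact h rfl } with hH
  set R : V → Prop := fun v => H.Reachable (src e) v with hR
  have hsrc : R (src e) := SimpleGraph.Reachable.refl _
  have hst : src e ≠ tgt e := by
    intro h
    exact hnc.false (Classical.choice (loopCycle src tgt e h))
  have htgt : ¬ R (tgt e) := by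
    intro hr
    obtain ⟨w⟩ := hr
    set p := w.toPath with hp
    set L := (p : SimpleGraph.Walk H (src e) (tgt e)).support with hL
    have hnd : L.Nodup := p.2.support_nodup
    have hch : List.Chain' H.Adj L := SimpleGraph.Walk.isChain_adj_support _
    have hcons : L = src e :: (p : SimpleGraph.Walk H (src e) (tgt e)).support.tail :=
      SimpleGraph.Walk.support_eq_cons _
    have hLpos : 0 < L.length := by rw [hcons]; simp
    have hlast : L.getLast (List.ne_nil_of_length_pos hLpos) = tgt e :=
      SimpleGraph.Walk.getLast_support _
    have hhead : L.get ⟨0, hLpos⟩ = src e := by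
      have h := List.get_of_eq hcons ⟨0, hLpos⟩
      simpa using h
    have hL2 : 2 ≤ L.length := by
      by_contra hcon
      have h1 : L.length = 1 := by omega
      have : L.getLast (List.ne_nil_of_length_pos hLpos) = L.get ⟨0, hLpos⟩ := by
        rw [List.getLast_eq_getElem, List.get_eq_getElem]
        simp only [show L.length - 1 = 0 by omega]
      rw [hlast, hhead] at this
      exact hst this.symm
    set n := L.length - 1 with hn
    have hcast : n + 1 = L.length := by omega
    set f : Fin (n + 1) → V := fun i => L.get (Fin.cast hcast i) with hf
    have hfinj : Function.Injective f := by
      intro a b hab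
      have := (List.nodup_iff_injective_get.mp hnd) hab
      exact Fin.cast_injective _ (by exact this)
    have hadj : ∀ i : Fin n, ∃ x, x ≠ e ∧
        ((src x = f i.castSucc ∧ tgt x = f i.succ) ∨
         (src x = f i.succ ∧ tgt x = f i.castSucc)) := by
      intro i
      have hi : (i : ℕ) < L.length - 1 := by omega
      have := List.isChain_iff_getElem.mp hch i (by omega)
      obtain ⟨-, x, hx, hor⟩ := this
      exact ⟨x, hx, by
        have e1 : f i.castSucc = L.get ⟨i, by omega⟩ := rfl
        have e2 : f i.succ = L.get ⟨i + 1, by omega⟩ := rfl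
        rw [e1, e2]
        exact hor⟩
    have h0 : f 0 = src e := by
      rw [← hhead]; rfl
    have hlf : f (Fin.last n) = tgt e := by
      rw [← hlast, List.getLast_eq_getElem]
      congr 1
    exact hnc.false (Classical.choice
      (buildCycle src tgt e n (by omega) f hfinj hadj h0 hlf))
  have key3 : ∀ x : E, x ≠ e → (R (src x) ↔ R (tgt x)) := by
    intro x hx
    by_cases hss : src x = tgt x
    · rw [hss]
    · have hadj : H.Adj (src x) (tgt x) := ⟨hss, x, hx, Or.inl ⟨rfl, rfl⟩⟩
      exact ⟨fun h => h.trans hadj.reachable, fun h => h.trans hadj.symm.reachable⟩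
  set A : Finset V := Finset.univ.filter R with hA
  have hmemA : ∀ v, v ∈ A ↔ R v := by
    intro v; simp [hA]
  have key : (X e : MvPolynomial E ℤ) =
      ∑ v ∈ A, (esymmOf ℤ (Finset.univ.filter fun x => src x = v) 1
        - esymmOf ℤ (Finset.univ.filter fun x => tgt x = v) 1) := by
    have step : ∀ v ∈ A, (esymmOf ℤ (Finset.univ.filter fun x => src x = v) 1
        - esymmOf ℤ (Finset.univ.filter fun x => tgt x = v) 1)
        = ∑ x : E, ((if src x = v then X x else 0) - (if tgt x = v then (X x : MvPolynomial E ℤ) else 0)) := by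
      intro v _
      rw [esymmOf_one, esymmOf_one, Finset.sum_filter, Finset.sum_filter,
        ← Finset.sum_sub_distrib]
    rw [Finset.sum_congr rfl step, Finset.sum_comm]
    have inner : ∀ x ∈ (Finset.univ : Finset E),
        (∑ v ∈ A, ((if src x = v then (X x : MvPolynomial E ℤ) else 0)
          - (if tgt x = v then X x else 0)))
        = (if src x ∈ A then X x else 0) - (if tgt x ∈ A then (X x : MvPolynomial E ℤ) else 0) := by
      intro x _
      rw [Finset.sum_sub_distrib, Finset.sum_ite_eq, Finset.sum_ite_eq]
    rw [Finset.sum_congr rfl inner]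
    rw [Finset.sum_eq_single e]
    · rw [if_pos ((hmemA _).mpr hsrc), if_neg (fun h => htgt ((hmemA _).mp h)), sub_zero]
    · intro x _ hx
      by_cases h : src x ∈ A
      · rw [if_pos h, if_pos ((hmemA _).mpr ((key3 x hx).mp ((hmemA _).mp h))), sub_self]
      · rw [if_neg h, if_neg (fun h' => h ((hmemA _).mpr ((key3 x hx).mpr ((hmemA _).mp h')))), sub_self]
    · intro h; exact absurd (Finset.mem_univ e) h
  rw [key]
  refine Ideal.sum_mem _ (fun v _ => Ideal.subset_span ⟨v, 1, le_refl 1, rfl⟩)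

lemma incidence_ne_of_cycle {V E : Type} [Fintype V] [Fintype E] [DecidableEq V]
    [DecidableEq E] (src tgt : E → V) (c : UndirCycle src tgt) :
    incidenceIdeal ℤ src tgt ≠ Ideal.span (Set.range (X : E → MvPolynomial E ℤ)) := by
  classical
  intro h
  set n := c.n with hn
  set s : ZMod (n + 1) → ℤ := fun i => if src (c.edge i) = c.vtx i then 1 else -1 with hs
  set φ : E → ℤ := fun x => ∑ i : ZMod (n + 1), if c.edge i = x then s i else 0 with hφ
  set ψ : MvPolynomial E ℤ →ₐ[ℤ] DualNumber ℤ :=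
    aeval (fun x => (φ x) • (DualNumber.eps : DualNumber ℤ)) with hψ
  have expand : ∀ (P : E → Prop) (_ : DecidablePred P),
      ∑ x ∈ Finset.univ.filter fun x => P x, φ x
        = ∑ i : ZMod (n + 1), if P (c.edge i) then s i else 0 := by
    intro P hP
    simp only [hφ]
    rw [Finset.sum_comm]
    refine Finset.sum_congr rfl fun i _ => ?_
    rw [Finset.sum_ite_eq]
    simp [Finset.mem_filter]
  have bal : ∀ v : V,
      (∑ x ∈ Finset.univ.filter fun x => src x = v, φ x)
        = ∑ x ∈ Finset.univ.filter fun x => tgt x = v, φ x := by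
    intro v
    rw [expand _ inferInstance, expand _ inferInstance, ← sub_eq_zero,
      ← Finset.sum_sub_distrib]
    have per : ∀ i, (if src (c.edge i) = v then s i else 0)
        - (if tgt (c.edge i) = v then s i else 0)
        = (if c.vtx i = v then (1 : ℤ) else 0) - (if c.vtx (i + 1) = v then 1 else 0) := by
      intro i
      rcases c.edge_ends i with ⟨h1, h2⟩ | ⟨h1, h2⟩
      · have hsi : s i = 1 := by simp [hs, h1]
        rw [h1, h2, hsi]
      · by_cases hh : src (c.edge i) = c.vtx i
        · have hvv : c.vtx (i + 1) = c.vtx i := hh.symm.trans h1 |>.symm ▸ rfl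
          rw [h1, h2, hvv, sub_self, sub_self]
        · have hsi : s i = -1 := by simp [hs, hh]
          rw [h1, h2, hsi]
          by_cases h3 : c.vtx (i + 1) = v <;> by_cases h4 : c.vtx i = v <;>
            simp [h3, h4]
    rw [Finset.sum_congr rfl (fun i _ => per i), Finset.sum_sub_distrib]
    rw [Fintype.sum_equiv (Equiv.addRight (1 : ZMod (n + 1)))
      (fun i => if c.vtx (i + 1) = v then (1 : ℤ) else 0)
      (fun i => if c.vtx i = v then (1 : ℤ) else 0) (fun i => rfl)]
    exact sub_self _
  have prodzero : ∀ (t : Finset E) (l : ℕ), 2 ≤ l → t.card = l →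
      ∏ x ∈ t, ((φ x) • (DualNumber.eps : DualNumber ℤ)) = 0 := by
    intro t l hl hcard
    obtain ⟨a, ha, b, hb, hab⟩ := Finset.one_lt_card.mp (by omega : 1 < t.card)
    rw [← Finset.mul_prod_erase t _ ha,
      ← Finset.mul_prod_erase _ _ (Finset.mem_erase.mpr ⟨Ne.symm hab, hb⟩),
      ← mul_assoc, smul_mul_smul_comm, DualNumber.eps_mul_eps, smul_zero, zero_mul]
  have hker : ∀ (v : V) (l : ℕ), 1 ≤ l →
      ψ (esymmOf ℤ (Finset.univ.filter fun x => src x = v) l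
        - esymmOf ℤ (Finset.univ.filter fun x => tgt x = v) l) = 0 := by
    intro v l hl
    rcases eq_or_lt_of_le hl with h1 | h2
    · rw [← h1, map_sub, esymmOf_one, esymmOf_one, map_sum, map_sum]
      simp only [hψ, aeval_X]
      rw [← Finset.sum_smul, ← Finset.sum_smul, bal v, sub_self]
    · have hz : ∀ s' : Finset E, ψ (esymmOf ℤ s' l) = 0 := by
        intro s'
        rw [esymmOf, map_sum]
        refine Finset.sum_eq_zero fun t ht => ?_
        rw [map_prod]
        simp only [hψ, aeval_X]
        exact prodzero t l h2 (Finset.mem_powersetCard.mp ht).2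
      rw [map_sub, hz, hz, sub_self]
  have hIker : incidenceIdeal ℤ src tgt ≤ RingHom.ker ψ.toRingHom := by
    rw [incidenceIdeal, Ideal.span_le]
    rintro f ⟨v, l, hl, rfl⟩
    exact hker v l hl
  have hmem : (X (c.edge 0) : MvPolynomial E ℤ) ∈ incidenceIdeal ℤ src tgt := by
    rw [h]; exact Ideal.subset_span ⟨c.edge 0, rfl⟩
  have h0 : ψ (X (c.edge 0)) = 0 := hIker hmem
  have hφ0 : φ (c.edge 0) = s 0 := by
    simp only [hφ, c.edge_inj.eq_iff]
    rw [Finset.sum_ite_eq']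
    simp
  rw [hψ] at h0
  rw [aeval_X, hφ0] at h0
  have hsnd := congrArg TrivSqZeroExt.snd h0
  rw [TrivSqZeroExt.snd_smul, DualNumber.snd_eps] at hsnd
  simp only [smul_eq_mul, mul_one] at hsnd
  have : s 0 ≠ 0 := by
    simp only [hs]
    split <;> omega
  exact this (by simpa using hsnd)

theorem stmt13 {V E : Type} [Fintype V] [Fintype E] [DecidableEq V] [DecidableEq E]
    (src tgt : E → V) :
    IsEmpty (UndirCycle src tgt) ↔
      incidenceIdeal ℤ src tgt = Ideal.span (Set.range (X : E → MvPolynomial E ℤ)) := by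
  constructor
  · intro hnc
    apply le_antisymm
    · rw [incidenceIdeal, Ideal.span_le]
      rintro f ⟨v, l, hl, rfl⟩
      exact sub_mem (esymmOf_mem_span _ hl) (esymmOf_mem_span _ hl)
    · rw [Ideal.span_le]
      rintro f ⟨e, rfl⟩
      exact X_mem_incidence src tgt hnc e
  · intro h
    by_contra hne
    rw [not_isEmpty_iff] at hne
    exact incidence_ne_of_cycle src tgt hne.some h
end

section
/- Let G be a directed graph. Let N be the subgroup of the free abelian group ℤ^{E(G)} on the edge set generated by the vectors δ_{v,1} = (sum of the standard basis vectors of the edges with initial vertex v) − (sum of the standard basis vectors of the edges with terminal vertex v), for v ∈ V(G), and let M = ℤ^{E(G)}/N (this is the degree-1 homogeneous component of ℤ[E(G)]/I(G)). Then: (1) G contains an undirected cycle if and only if M ≠ 0; (2) α_undirected(G) ≤ rank M ≤ β_undirected(G), where rank M = dim_ℚ(ℚ ⊗_ℤ M). -/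
open MvPolynomial

/-- The degree-one incidence vector `δ_{v,1} ∈ ℤ^E` of a vertex `v`:
(sum of the basis vectors of edges with initial vertex `v`) minus
(sum of the basis vectors of edges with terminal vertex `v`).
The contributions of a loop at `v` cancel. -/
def deltaVec {V E : Type} [DecidableEq V] (src tgt : E → V) (v : V) : E → ℤ :=
  fun x => (if src x = v then 1 else 0) - (if tgt x = v then 1 else 0)

/-- `α_undirected(G)`: the maximal number of pairwise edge-disjoint undirected cycles. -/
noncomputable def uCyclePacking {V E : Type} (src tgt : E → V) : ℕ :=
  sSup {k | ∃ f : Fin k → UndirCycle src tgt,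
    ∀ i j, i ≠ j → Disjoint (Set.range (f i).edge) (Set.range (f j).edge)}

/-- `β_undirected(G)`: the minimal number of edges whose removal destroys all
undirected cycles. -/
noncomputable def uCyclomatic {V E : Type} [Fintype E] (src tgt : E → V) : ℕ :=
  sInf {k | ∃ S : Finset E, S.card = k ∧
    ∀ c : UndirCycle src tgt, ∃ x ∈ S, x ∈ Set.range c.edge}

open TensorProduct

section Cyc
variable {V E : Type} [Fintype V] [Fintype E] [DecidableEq V] [DecidableEq E]
  (src tgt : E → V)

/-- sign of edge `i` in the cycle -/
def csgn (c : UndirCycle src tgt) (i : ZMod (c.n + 1)) : ℤ :=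
  if src (c.edge i) = c.vtx i then 1 else -1

def cycVec (c : UndirCycle src tgt) : E → ℤ :=
  fun x => ∑ i : ZMod (c.n + 1), if c.edge i = x then csgn src tgt c i else 0

lemma cycVec_edge (c : UndirCycle src tgt) (i0 : ZMod (c.n + 1)) :
    cycVec src tgt c (c.edge i0) = csgn src tgt c i0 := by
  unfold cycVec
  rw [Finset.sum_eq_single i0]
  · simp
  · intro b _ hb
    rw [if_neg (fun h => hb (c.edge_inj h))]
  · simp

lemma cycVec_not_mem (c : UndirCycle src tgt) (x : E) (hx : x ∉ Set.range c.edge) :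
    cycVec src tgt c x = 0 := by
  unfold cycVec
  apply Finset.sum_eq_zero
  intro i _
  rw [if_neg (fun h => hx ⟨i, h⟩)]

lemma csgn_mul_delta (c : UndirCycle src tgt) (v : V) (i : ZMod (c.n + 1)) :
    csgn src tgt c i * deltaVec src tgt v (c.edge i)
      = (if c.vtx i = v then 1 else 0) - (if c.vtx (i + 1) = v then 1 else 0) := by
  rcases c.edge_ends i with ⟨h1, h2⟩ | ⟨h1, h2⟩
  · simp [csgn, deltaVec, h1, h2]
  · by_cases hiv : c.vtx (i + 1) = c.vtx i
    · rw [hiv] at h1 ⊢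
      simp [csgn, deltaVec, h1, h2]
    · have hne : ¬ (src (c.edge i) = c.vtx i) := by rw [h1]; exact hiv
      rw [csgn, if_neg hne]
      unfold deltaVec
      rw [h1, h2]
      ring

lemma sum_csgn_delta (c : UndirCycle src tgt) (v : V) :
    ∑ i : ZMod (c.n + 1), csgn src tgt c i * deltaVec src tgt v (c.edge i) = 0 := by
  simp only [csgn_mul_delta]
  rw [Finset.sum_sub_distrib]
  rw [Fintype.sum_equiv (Equiv.addRight (1 : ZMod (c.n+1)))
    (fun i => if c.vtx (i + 1) = v then (1:ℤ) else 0) (fun i => if c.vtx i = v then 1 else 0)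
    (fun i => rfl)]
  simp

/-- dot product with `z` as a linear functional -/
def dotL (z : E → ℤ) : (E → ℤ) →ₗ[ℤ] ℤ :=
  ∑ x : E, z x • (LinearMap.proj x : (E → ℤ) →ₗ[ℤ] ℤ)

lemma dotL_apply (z w : E → ℤ) : dotL z w = ∑ x : E, z x * w x := by
  simp [dotL]

lemma dotL_cycVec_delta (c : UndirCycle src tgt) (v : V) :
    dotL (cycVec src tgt c) (deltaVec src tgt v) = 0 := by
  rw [dotL_apply]
  have key : ∀ x, cycVec src tgt c x * deltaVec src tgt v x
      = ∑ i : ZMod (c.n+1), if c.edge i = x then csgn src tgt c i * deltaVec src tgt v x else 0 := by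
    intro x; rw [cycVec, Finset.sum_mul]
    exact Finset.sum_congr rfl fun i _ => by rw [ite_mul, zero_mul]
  simp only [key]
  rw [Finset.sum_comm]
  have inner : ∀ i : ZMod (c.n+1),
      (∑ x : E, if c.edge i = x then csgn src tgt c i * deltaVec src tgt v x else 0)
        = csgn src tgt c i * deltaVec src tgt v (c.edge i) := fun i => by
    rw [Finset.sum_ite_eq Finset.univ (c.edge i)
      (fun x => csgn src tgt c i * deltaVec src tgt v x), if_pos (Finset.mem_univ _)]
  rw [Finset.sum_congr rfl (fun i _ => inner i), sum_csgn_delta]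

lemma dotL_cycVec_span (c : UndirCycle src tgt) (w : E → ℤ)
    (hw : w ∈ Submodule.span ℤ (Set.range (deltaVec src tgt))) :
    dotL (cycVec src tgt c) w = 0 := by
  have : Submodule.span ℤ (Set.range (deltaVec src tgt)) ≤ LinearMap.ker (dotL (cycVec src tgt c)) := by
    rw [Submodule.span_le]
    rintro - ⟨v, rfl⟩
    exact dotL_cycVec_delta src tgt c v
  exact this hw

end Cyc

section Paths
variable {V E : Type} [Fintype V] [Fintype E] [DecidableEq V] [DecidableEq E]
  (src tgt : E → V) (S : Finset E)

def IsPath (m : ℕ) (v : Fin (m+1) → V) (e : Fin m → E) : Prop :=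
  Function.Injective v ∧ (∀ i, e i ∉ S) ∧
  ∀ i : Fin m, (src (e i) = v i.castSucc ∧ tgt (e i) = v i.succ) ∨
    (src (e i) = v i.succ ∧ tgt (e i) = v i.castSucc)

def cvtx {m j : ℕ} (hj : j < m) (v : Fin (m+1) → V) : ZMod (m-j+1) → V :=
  fun i => v ⟨j + i.val, by have := ZMod.val_lt i; omega⟩

def cedge {m j : ℕ} (e : Fin m → E) (y : E) : ZMod (m-j+1) → E :=
  fun i => if h : j + i.val < m then e ⟨j + i.val, h⟩ else y

variable (hS : ∀ c : UndirCycle src tgt, ∃ x ∈ S, x ∈ Set.range c.edge)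
include hS

lemma no_loop {x : E} (hx : x ∉ S) : src x ≠ tgt x := by
  intro hloop
  have hinj : ∀ a b : ZMod (0+1), a = b := by
    intro a b
    have ha := ZMod.val_lt a; have hb := ZMod.val_lt b
    exact ZMod.val_injective _ (by omega)
  obtain ⟨z, hzS, ⟨i, hzi⟩⟩ := hS ⟨0, fun _ => src x, fun _ => x,
    fun a b _ => hinj a b, fun a b _ => hinj a b, fun i => Or.inl ⟨rfl, hloop.symm⟩⟩
  rw [← hzi] at hzS
  exact hx hzS

lemma path_edge_inj {m : ℕ} {v : Fin (m+1) → V} {e : Fin m → E}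
    (hp : IsPath src tgt S m v e) : Function.Injective e := by
  intro a b hab
  obtain ⟨hv, -, hends⟩ := hp
  have h1 := hends a
  have h2 := hends b
  rw [hab] at h1
  rcases h1 with ⟨p1, q1⟩ | ⟨p1, q1⟩ <;> rcases h2 with ⟨p2, q2⟩ | ⟨p2, q2⟩ <;>
  · have h3 := congrArg Fin.val (hv (p1.symm.trans p2))
    have h4 := congrArg Fin.val (hv (q1.symm.trans q2))
    simp only [Fin.coe_castSucc, Fin.val_succ] at h3 h4
    exact Fin.ext (by omega)

lemma path_cycle {m : ℕ} {v : Fin (m+1) → V} {e : Fin m → E}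
    (hp : IsPath src tgt S m v e) (j : ℕ) (hj : j < m) (y : E) (hyS : y ∉ S)
    (hy : (src y = v (Fin.last m) ∧ tgt y = v ⟨j, by omega⟩) ∨
          (src y = v ⟨j, by omega⟩ ∧ tgt y = v (Fin.last m)))
    (hye : ∀ i, y ≠ e i) : False := by
  obtain ⟨hv, heS, hends⟩ := hp
  have hval : ∀ i : ZMod (m - j + 1), i.val < m - j + 1 := fun i => ZMod.val_lt i
  have hone : (1 : ZMod (m - j + 1)).val = 1 := by
    rw [ZMod.val_one_eq_one_mod]; exact Nat.mod_eq_of_lt (by omega)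
  have hsucc : ∀ i : ZMod (m - j + 1), (i + 1).val = (i.val + 1) % (m - j + 1) := by
    intro i; rw [ZMod.val_add, hone]
  have hvtx_inj : Function.Injective (cvtx hj v : ZMod (m-j+1) → V) := by
    intro a b hab
    have := congrArg Fin.val (hv hab)
    simp only at this
    exact ZMod.val_injective _ (by omega)
  have hedge_inj : Function.Injective (cedge e y : ZMod (m-j+1) → E) := by
    intro a b hab
    unfold cedge at hab
    by_cases h1 : j + a.val < m <;> by_cases h2 : j + b.val < m
    · rw [dif_pos h1, dif_pos h2] at hab
      have := congrArg Fin.val (path_edge_inj src tgt S hS ⟨hv, heS, hends⟩ hab)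
      simp only at this
      exact ZMod.val_injective _ (by omega)
    · rw [dif_pos h1, dif_neg h2] at hab
      exact absurd hab.symm (hye _)
    · rw [dif_neg h1, dif_pos h2] at hab
      exact absurd hab (hye _)
    · have := hval a; have := hval b
      exact ZMod.val_injective _ (by omega)
  have hcends : ∀ i : ZMod (m-j+1),
      (src (cedge e y i) = cvtx hj v i ∧ tgt (cedge e y i) = cvtx hj v (i + 1)) ∨
      (src (cedge e y i) = cvtx hj v (i + 1) ∧ tgt (cedge e y i) = cvtx hj v i) := by
    intro i
    unfold cedge cvtx
    by_cases h : j + i.val < m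
    · have hi1 : (i + 1).val = i.val + 1 := by
        rw [hsucc]; have := hval i
        exact Nat.mod_eq_of_lt (by omega)
      have hcast : v (⟨j + i.val, h⟩ : Fin m).castSucc = v ⟨j + i.val, by omega⟩ := rfl
      have hsucc2 : v (⟨j + i.val, h⟩ : Fin m).succ = v ⟨j + (i+1).val, by
          have := hval (i+1); omega⟩ := by
        congr 1
        apply Fin.ext
        simp only [Fin.val_succ, hi1]
        omega
      have := hends ⟨j + i.val, h⟩
      rw [hcast, hsucc2] at this
      rw [dif_pos h]
      exact this
    · have hiv : i.val = m - j := by have := hval i; omega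
      have hi1 : (i + 1).val = 0 := by rw [hsucc, hiv]; exact Nat.mod_self _
      have h1 : v (⟨j + i.val, by have := hval i; omega⟩ : Fin (m+1)) = v (Fin.last m) := by
        congr 1; apply Fin.ext; simp only [hiv, Fin.val_last]; omega
      have h2 : v (⟨j + (i+1).val, by have := hval (i+1); omega⟩ : Fin (m+1))
          = v ⟨j, by omega⟩ := by congr 1; apply Fin.ext; simp only [hi1, Nat.add_zero]
      rw [dif_neg h, h1, h2]
      exact hy
  obtain ⟨z, hzS, ⟨i, hzi⟩⟩ := hS ⟨m - j, cvtx hj v, cedge e y,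
    hvtx_inj, hedge_inj, hcends⟩
  simp only [cedge] at hzi
  by_cases h : j + i.val < m
  · rw [dif_pos h] at hzi; rw [← hzi] at hzS; exact heS _ hzS
  · rw [dif_neg h] at hzi; rw [← hzi] at hzS; exact hyS hzS

end Paths

section Leaf
variable {V E : Type} [Fintype V] [Fintype E] [DecidableEq V] [DecidableEq E]
  (src tgt : E → V) (S : Finset E)
variable (hS : ∀ c : UndirCycle src tgt, ∃ x ∈ S, x ∈ Set.range c.edge)
include hS

lemma exists_leaf (x0 : E) (hx0 : x0 ∉ S) :
    ∃ x, x ∉ S ∧ ∃ w : V, (src x = w ∨ tgt x = w) ∧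
      ∀ y, y ∉ S → y ≠ x → src y ≠ w ∧ tgt y ≠ w := by
  classical
  set P : Set ℕ := {m | ∃ v : Fin (m+1) → V, ∃ e : Fin m → E, IsPath src tgt S m v e} with hP
  have fin2 : ∀ a : Fin 2, a = 0 ∨ a = 1 := by decide
  have h1 : 1 ∈ P := by
    refine ⟨fun i => if i = 0 then src x0 else tgt x0, fun _ => x0, ?_, fun _ => hx0, ?_⟩
    · intro a b hab
      have hl := no_loop src tgt S hS hx0
      rcases fin2 a with ha | ha <;> rcases fin2 b with hb | hb <;>
        subst ha <;> subst hb <;> simp_all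
    · intro i
      have hc : i.castSucc = (0 : Fin 2) := by
        apply Fin.ext; have := i.isLt; simp only [Fin.coe_castSucc, Fin.val_zero]; omega
      have hs : i.succ = (1 : Fin 2) := by
        apply Fin.ext; have := i.isLt; simp only [Fin.val_succ, Fin.val_one]; omega
      rw [hc, hs]
      exact Or.inl ⟨by simp, by simp⟩
  have hbdd : BddAbove P := by
    refine ⟨Fintype.card V, fun m hm => ?_⟩
    obtain ⟨v, e, hv, -, -⟩ := hm
    have := Fintype.card_le_of_injective v hv
    simp only [Fintype.card_fin] at this
    omega
  set m := sSup P with hm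
  have hmem : m ∈ P := Nat.sSup_mem ⟨1, h1⟩ hbdd
  have hm1 : 1 ≤ m := le_csSup hbdd h1
  obtain ⟨v, e, hp⟩ := hmem
  obtain ⟨hv, heS, hends⟩ := hp
  have hlast : (⟨m - 1, by omega⟩ : Fin m).succ = Fin.last m := by
    apply Fin.ext; simp only [Fin.val_succ, Fin.val_last]; omega
  set w := v (Fin.last m) with hw
  set x := e ⟨m - 1, by omega⟩ with hx
  refine ⟨x, heS _, w, ?_, ?_⟩
  · have := hends ⟨m - 1, by omega⟩
    rw [hlast] at this
    rcases this with ⟨h1', h2'⟩ | ⟨h1', h2'⟩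
    · exact Or.inr h2'
    · exact Or.inl h1'
  · intro y hyS hyx
    have hkey : ¬ (src y = w ∨ tgt y = w) := by
      intro hyw
      -- the other endpoint
      have hloop : src y ≠ tgt y := no_loop src tgt S hS hyS
      obtain ⟨u, hu, hjoins⟩ : ∃ u, u ≠ w ∧
          ((src y = w ∧ tgt y = u) ∨ (src y = u ∧ tgt y = w)) := by
        rcases hyw with h | h
        · exact ⟨tgt y, by rw [← h]; exact fun hh => hloop hh.symm, Or.inl ⟨h, rfl⟩⟩
        · exact ⟨src y, by rw [← h]; exact fun hh => hloop hh, Or.inr ⟨rfl, h⟩⟩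
      have hye : ∀ i, y ≠ e i := by
        intro i hyi
        have hei := hends i
        rw [← hyi] at hei
        have hwv : w = v i.castSucc ∨ w = v i.succ := by
          rcases hyw with h | h <;> rcases hei with ⟨p, q⟩ | ⟨p, q⟩
          · exact Or.inl (h.symm.trans p)
          · exact Or.inr (h.symm.trans p)
          · exact Or.inr (h.symm.trans q)
          · exact Or.inl (h.symm.trans q)
        rcases hwv with h | h
        · have := congrArg Fin.val (hv h)
          simp only [Fin.val_last, Fin.coe_castSucc] at this
          have := i.isLt
          omega
        · have h2 := congrArg Fin.val (hv h)
          simp only [Fin.val_last, Fin.val_succ] at h2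
          apply hyx
          rw [hx, hyi]
          congr 1
          apply Fin.ext
          simp only
          omega
      by_cases hu_mem : u ∈ Set.range v
      · obtain ⟨k, hk⟩ := hu_mem
        have hkm : k.val < m := by
          have hne : k ≠ Fin.last m := by
            intro hkl; rw [hkl] at hk; exact hu hk.symm
          have hlt := k.isLt
          by_contra hge
          exact hne (Fin.ext (by simp only [Fin.val_last]; omega))
        refine path_cycle src tgt S hS ⟨hv, heS, hends⟩ k.val hkm y hyS ?_ hye
        have : v ⟨k.val, by omega⟩ = u := by rw [← hk]
        rw [this]
        exact hjoins
      · -- extend the path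
        have hext : m + 1 ∈ P := by
          refine ⟨Fin.snoc v u, Fin.snoc e y, ?_, ?_, ?_⟩
          · intro a b hab
            rcases Fin.eq_castSucc_or_eq_last a with ⟨a', rfl⟩ | rfl <;>
              rcases Fin.eq_castSucc_or_eq_last b with ⟨b', rfl⟩ | rfl
            · rw [Fin.snoc_castSucc, Fin.snoc_castSucc] at hab
              rw [hv hab]
            · rw [Fin.snoc_castSucc, Fin.snoc_last] at hab
              exact absurd ⟨_, hab⟩ hu_mem
            · rw [Fin.snoc_last, Fin.snoc_castSucc] at hab
              exact absurd ⟨_, hab.symm⟩ hu_mem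
            · rfl
          · intro i
            rcases Fin.eq_castSucc_or_eq_last i with ⟨i', rfl⟩ | rfl
            · rw [Fin.snoc_castSucc]; exact heS i'
            · rw [Fin.snoc_last]; exact hyS
          · intro i
            rcases Fin.eq_castSucc_or_eq_last i with ⟨i', rfl⟩ | rfl
            · simp only [Fin.snoc_castSucc, Fin.succ_castSucc]
              exact hends i'
            · rw [Fin.snoc_last, Fin.succ_last, Fin.snoc_last]
              have : (Fin.last m).castSucc = Fin.castSucc (Fin.last m) := rfl
              rw [this, Fin.snoc_castSucc]
              exact hjoins
        have := le_csSup hbdd hext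
        omega
    exact ⟨fun h => hkey (Or.inl h), fun h => hkey (Or.inr h)⟩

end Leaf

section Span
variable {V E : Type} [Fintype V] [Fintype E] [DecidableEq V] [DecidableEq E]
  (src tgt : E → V)

lemma span_singles_aux : ∀ (k : ℕ) (S : Finset E), Sᶜ.card ≤ k →
    (∀ c : UndirCycle src tgt, ∃ x ∈ S, x ∈ Set.range c.edge) →
    ∀ y, y ∉ S → Pi.single y (1:ℤ) ∈ Submodule.span ℤ
      (Set.range (deltaVec src tgt) ∪ (fun s => Pi.single s (1:ℤ)) '' ↑S) := by
  intro k
  induction k with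
  | zero =>
    intro S hcard hS y hy
    exfalso
    have : y ∈ Sᶜ := Finset.mem_compl.mpr hy
    have := Finset.card_pos.mpr ⟨y, this⟩
    omega
  | succ k ih =>
    intro S hcard hS y hy
    obtain ⟨x, hxS, w, hxw, hleaf⟩ := exists_leaf src tgt S hS y hy
    have hloopx : src x ≠ tgt x := no_loop src tgt S hS hxS
    set c : ℤ := deltaVec src tgt w x with hc
    have hc1 : c = 1 ∨ c = -1 := by
      rcases hxw with h | h
      · left; rw [hc]; unfold deltaVec
        rw [if_pos h, if_neg (by rw [← h]; exact fun hh => hloopx hh.symm)]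
        ring
      · right; rw [hc]; unfold deltaVec
        rw [if_neg (by rw [← h]; exact fun hh => hloopx hh), if_pos h]
        ring
    have hkey : (c • Pi.single x (1:ℤ) : E → ℤ)
        = deltaVec src tgt w - ∑ s ∈ S, (deltaVec src tgt w s) • Pi.single s (1:ℤ) := by
      funext z
      simp only [Pi.smul_apply, Pi.sub_apply, Finset.sum_apply, Pi.single_apply,
        smul_eq_mul, mul_ite, mul_one, mul_zero]
      by_cases hzx : z = x
      · subst hzx
        rw [if_pos rfl]
        rw [Finset.sum_eq_zero (fun s hs => by
          rw [if_neg (fun hh : z = s => hxS (hh ▸ hs))])]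
        omega
      · rw [if_neg hzx]
        by_cases hzS : z ∈ S
        · rw [Finset.sum_eq_single z]
          · rw [if_pos rfl]; omega
          · intro b _ hb; rw [if_neg (fun hh => hb hh.symm)]
          · intro h; exact absurd hzS h
        · rw [Finset.sum_eq_zero (fun s hs => by
            rw [if_neg (fun hh : z = s => hzS (hh ▸ hs))])]
          have := hleaf z hzS hzx
          unfold deltaVec
          rw [if_neg this.1, if_neg this.2]
          omega
    have hxmem : Pi.single x (1:ℤ) ∈ Submodule.span ℤ
        (Set.range (deltaVec src tgt) ∪ (fun s => Pi.single s (1:ℤ)) '' ↑S) := by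
      have hrhs : deltaVec src tgt w - ∑ s ∈ S, (deltaVec src tgt w s) • Pi.single s (1:ℤ)
          ∈ Submodule.span ℤ
            (Set.range (deltaVec src tgt) ∪ (fun s => Pi.single s (1:ℤ)) '' ↑S) := by
        apply Submodule.sub_mem
        · exact Submodule.subset_span (Or.inl ⟨w, rfl⟩)
        · apply Submodule.sum_mem
          intro s hs
          exact Submodule.smul_mem _ _ (Submodule.subset_span (Or.inr ⟨s, hs, rfl⟩))
      have : Pi.single x (1:ℤ) = c • (c • Pi.single x (1:ℤ) : E → ℤ) := by
        rw [smul_smul]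
        rcases hc1 with h | h <;> rw [h] <;> norm_num
      rw [this, hkey]
      exact Submodule.smul_mem _ _ hrhs
    by_cases hyx : y = x
    · rw [hyx]; exact hxmem
    · have hS' : ∀ c : UndirCycle src tgt, ∃ z ∈ insert x S, z ∈ Set.range c.edge := by
        intro c'
        obtain ⟨z, hz, hz2⟩ := hS c'
        exact ⟨z, Finset.mem_insert_of_mem hz, hz2⟩
      have hcard' : (insert x S)ᶜ.card ≤ k := by
        rw [Finset.compl_insert]
        have hxmemc : x ∈ Sᶜ := Finset.mem_compl.mpr hxS
        have := Finset.card_erase_of_mem hxmemc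
        omega
      have hy' := ih (insert x S) hcard' hS' y (by
        simp only [Finset.mem_insert, not_or]; exact ⟨hyx, hy⟩)
      refine Submodule.span_le.mpr ?_ hy'
      rintro z (hz | ⟨s, hs, rfl⟩)
      · exact Submodule.subset_span (Or.inl hz)
      · rcases Finset.mem_insert.mp hs with rfl | hsS
        · exact hxmem
        · exact Submodule.subset_span (Or.inr ⟨s, hsS, rfl⟩)

lemma span_singles (S : Finset E)
    (hS : ∀ c : UndirCycle src tgt, ∃ x ∈ S, x ∈ Set.range c.edge) :
    ∀ y, y ∉ S → Pi.single y (1:ℤ) ∈ Submodule.span ℤ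
      (Set.range (deltaVec src tgt) ∪ (fun s => Pi.single s (1:ℤ)) '' ↑S) :=
  span_singles_aux src tgt Sᶜ.card S le_rfl hS

end Span

section Main
variable {V E : Type} [Fintype V] [Fintype E] [DecidableEq V] [DecidableEq E]
  (src tgt : E → V)

lemma pi_decomp (w : E → ℤ) : ∑ x : E, w x • Pi.single x (1:ℤ) = w := by
  funext z
  simp only [Finset.sum_apply, Pi.smul_apply, Pi.single_apply, smul_eq_mul,
    mul_ite, mul_one, mul_zero]
  rw [Finset.sum_ite_eq Finset.univ z w, if_pos (Finset.mem_univ _)]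

lemma dotL_single (z : E → ℤ) (a : E) : dotL z (Pi.single a 1) = z a := by
  rw [dotL_apply]
  simp only [Pi.single_apply, mul_ite, mul_one, mul_zero]
  rw [Finset.sum_ite_eq' Finset.univ a z, if_pos (Finset.mem_univ _)]

lemma csgn_ne_zero (c : UndirCycle src tgt) (i : ZMod (c.n + 1)) :
    csgn src tgt c i ≠ 0 := by
  unfold csgn; split <;> norm_num

theorem stmt14' :
    (Nonempty (UndirCycle src tgt) ↔
        Nontrivial ((E → ℤ) ⧸ Submodule.span ℤ (Set.range (deltaVec src tgt)))) ∧
      uCyclePacking src tgt ≤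
        Module.finrank ℚ
          (ℚ ⊗[ℤ] ((E → ℤ) ⧸ Submodule.span ℤ (Set.range (deltaVec src tgt)))) ∧
      Module.finrank ℚ
          (ℚ ⊗[ℤ] ((E → ℤ) ⧸ Submodule.span ℤ (Set.range (deltaVec src tgt)))) ≤
        uCyclomatic src tgt := by
  classical
  set N := Submodule.span ℤ (Set.range (deltaVec src tgt)) with hN
  -- the linear functional induced by a cycle
  have hker : ∀ c : UndirCycle src tgt, N ≤ LinearMap.ker (dotL (cycVec src tgt c)) := by
    intro c
    rw [hN, Submodule.span_le]
    rintro - ⟨v, rfl⟩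
    exact dotL_cycVec_delta src tgt c v
  -- (1) forward
  have fwd : Nonempty (UndirCycle src tgt) →
      Nontrivial ((E → ℤ) ⧸ N) := by
    rintro ⟨c⟩
    refine ⟨Submodule.Quotient.mk (Pi.single (c.edge 0) 1), 0, ?_⟩
    intro hh
    rw [Submodule.Quotient.mk_eq_zero] at hh
    have h0 := hker c hh
    rw [LinearMap.mem_ker, dotL_single, cycVec_edge] at h0
    exact csgn_ne_zero src tgt c 0 h0
  -- (1) backward
  have bwd : Nontrivial ((E → ℤ) ⧸ N) → Nonempty (UndirCycle src tgt) := by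
    intro hnt
    by_contra hcyc
    have hS : ∀ c : UndirCycle src tgt, ∃ x ∈ (∅ : Finset E), x ∈ Set.range c.edge :=
      fun c => absurd ⟨c⟩ hcyc
    have hall := span_singles src tgt ∅ hS
    have hNtop : N = ⊤ := by
      rw [eq_top_iff]
      intro w _
      rw [← pi_decomp w]
      apply Submodule.sum_mem
      intro x _
      apply Submodule.smul_mem
      have := hall x (Finset.notMem_empty x)
      simpa using this
    rw [hNtop] at hnt
    have : Subsingleton ((E → ℤ) ⧸ (⊤ : Submodule ℤ (E → ℤ))) :=
      Submodule.Quotient.subsingleton_iff.mpr rfl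
    exact not_subsingleton_iff_nontrivial.mpr hnt this
  refine ⟨⟨fwd, bwd⟩, ?_, ?_⟩
  · -- packing ≤ rank
    rw [uCyclePacking]
    have h0 : 0 ∈ {k | ∃ f : Fin k → UndirCycle src tgt,
        ∀ i j, i ≠ j → Disjoint (Set.range (f i).edge) (Set.range (f j).edge)} :=
      ⟨Fin.elim0, fun i => i.elim0⟩
    apply csSup_le ⟨0, h0⟩
    rintro k ⟨f, hf⟩
    -- functionals
    set φ : Fin k → (((E → ℤ) ⧸ N) →ₗ[ℤ] ℤ) :=
      fun i => Submodule.liftQ N (dotL (cycVec src tgt (f i))) (hker (f i)) with hφ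
    set ψ : Fin k → ((ℚ ⊗[ℤ] ((E → ℤ) ⧸ N)) →ₗ[ℚ] ℚ) :=
      fun i => LinearMap.liftBaseChange ℚ ((Algebra.linearMap ℤ ℚ).comp (φ i)) with hψ
    set wv : Fin k → (ℚ ⊗[ℤ] ((E → ℤ) ⧸ N)) :=
      fun j => (1:ℚ) ⊗ₜ[ℤ] Submodule.Quotient.mk (Pi.single ((f j).edge 0) 1) with hwv
    have hψw : ∀ i j, ψ i (wv j) = ((cycVec src tgt (f i)) ((f j).edge 0) : ℚ) := by
      intro i j
      rw [hψ, hwv]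
      simp only [LinearMap.liftBaseChange_tmul, LinearMap.comp_apply,
        Submodule.liftQ_apply, Algebra.linearMap_apply, one_smul, hφ]
      rw [dotL_single]
      norm_num
    have hdiag : ∀ i j, i ≠ j → ψ i (wv j) = 0 := by
      intro i j hij
      rw [hψw]
      rw [cycVec_not_mem]
      · norm_num
      · intro hmem
        exact Set.disjoint_left.mp (hf i j hij) hmem ⟨0, rfl⟩
    have hli : LinearIndependent ℚ wv := by
      rw [Fintype.linearIndependent_iff]
      intro g hg i
      have h0 := congrArg (ψ i) hg
      rw [map_sum, map_zero] at h0
      simp only [map_smul] at h0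
      rw [Finset.sum_eq_single i] at h0
      · rw [hψw i i, cycVec_edge] at h0
        have hnz : ((csgn src tgt (f i) 0 : ℤ) : ℚ) ≠ 0 := by
          rw [Int.cast_ne_zero]; exact csgn_ne_zero src tgt (f i) 0
        rcases smul_eq_zero.mp h0 with h | h
        · exact h
        · exact absurd h hnz
      · intro b _ hb
        rw [hdiag i b (Ne.symm hb), smul_zero]
      · intro h; exact absurd (Finset.mem_univ i) h
    have := hli.fintype_card_le_finrank
    simpa using this
  · -- rank ≤ cyclomatic
    have hne : {k | ∃ S : Finset E, S.card = k ∧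
        ∀ c : UndirCycle src tgt, ∃ x ∈ S, x ∈ Set.range c.edge}.Nonempty := by
      exact ⟨(Finset.univ : Finset E).card, Finset.univ, rfl,
        fun c => ⟨c.edge 0, Finset.mem_univ _, ⟨0, rfl⟩⟩⟩
    obtain ⟨S, hScard, hS⟩ := Nat.sInf_mem hne
    rw [uCyclomatic, ← hScard]
    -- generators of M
    have hMtop : Submodule.span ℤ (Set.range (fun s : ↥S =>
        (Submodule.Quotient.mk (Pi.single (s : E) (1:ℤ)) : (E → ℤ) ⧸ N))) = ⊤ := by
      rw [eq_top_iff]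
      rintro m -
      obtain ⟨w, rfl⟩ := Submodule.mkQ_surjective N m
      rw [← pi_decomp w, map_sum]
      apply Submodule.sum_mem
      intro x _
      rw [map_smul]
      apply Submodule.smul_mem
      by_cases hxS : x ∈ S
      · exact Submodule.subset_span ⟨⟨x, hxS⟩, rfl⟩
      · have hsp := span_singles src tgt S hS x hxS
        have : Submodule.Quotient.mk (p := N) (Pi.single x (1:ℤ)) ∈
            Submodule.map (Submodule.mkQ N)
              (Submodule.span ℤ (Set.range (deltaVec src tgt) ∪
                (fun s => Pi.single s (1:ℤ)) '' ↑S)) := ⟨_, hsp, rfl⟩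
        rw [Submodule.map_span] at this
        refine Submodule.span_le.mpr ?_ this
        rintro z ⟨z', hz', rfl⟩
        rcases hz' with ⟨v, rfl⟩ | ⟨s, hs, rfl⟩
        · have : (Submodule.mkQ N) (deltaVec src tgt v) = 0 := by
            rw [Submodule.mkQ_apply, Submodule.Quotient.mk_eq_zero]
            exact Submodule.subset_span ⟨v, rfl⟩
          rw [this]
          exact Submodule.zero_mem _
        · exact Submodule.subset_span ⟨⟨s, hs⟩, rfl⟩
    -- base change
    have hWtop : Submodule.span ℚ (Set.range (fun s : ↥S =>
        ((1:ℚ) ⊗ₜ[ℤ] (Submodule.Quotient.mk (Pi.single (s : E) (1:ℤ)) : (E → ℤ) ⧸ N)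
          : ℚ ⊗[ℤ] ((E → ℤ) ⧸ N)))) = ⊤ := by
      have h1 := congrArg (Submodule.baseChange ℚ) hMtop
      rw [Submodule.baseChange_top, Submodule.baseChange_span] at h1
      rw [← h1]
      congr 1
      rw [← Set.range_comp]
      rfl
    have := finrank_le_of_span_eq_top hWtop
    simpa using this

end Main


theorem stmt14 {V E : Type} [Fintype V] [Fintype E] [DecidableEq V] [DecidableEq E]
    (src tgt : E → V) :
    (Nonempty (UndirCycle src tgt) ↔
        Nontrivial ((E → ℤ) ⧸ Submodule.span ℤ (Set.range (deltaVec src tgt)))) ∧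
      uCyclePacking src tgt ≤
        Module.finrank ℚ
          (ℚ ⊗[ℤ] ((E → ℤ) ⧸ Submodule.span ℤ (Set.range (deltaVec src tgt)))) ∧
      Module.finrank ℚ
          (ℚ ⊗[ℤ] ((E → ℤ) ⧸ Submodule.span ℤ (Set.range (deltaVec src tgt)))) ≤
        uCyclomatic src tgt := stmt14' src tgt
end
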